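/- arXiv:2407.20718 — 4 statements merged into one kernel-verified Lean document; each statement's English description precedes it below -/
import Mathlib

section
/- (Weighted Dynkin–Specht–Wever lemma in the universal enveloping algebra of a graded Lie algebra.) Let K be a commutative ring which is a ℚ-algebra and g a Lie algebra over K equipped with a K-grading: a family of K-submodules G(k) (k ∈ K) of g which form an internal direct sum decomposition of g and satisfy ⁅G(i), G(j)⁆ ⊆ G(i+j) for all i, j ∈ K. Let T := ⨁_{n∈ℕ} ⨂^n g and let m : T → U(g) be the K-linear map restricting to m_n on each summand. Let W ⊆ T be a K-submodule such that: (i) for every n and every permutation σ of {1,…,n}, the map acting as P_σ on the n-th summand and as the identity on all other summands sends W into W; and (ii) for every n, every position j ∈ {1,…,n} and every k ∈ K, the map acting on the n-th summand by applying in the j-th tensor factor the projection of g onto G(k) coming from the internal direct sum decomposition (and the identity in all other factors and on all other summands) sends W into W. Suppose the restriction of m to W is injective. Let F be a finite index set and for each f ∈ F let n_f ≥ 1, let w_{1,f},…,w_{n_f,f} ∈ K and a_{i,f} ∈ G(w_{i,f}) for i ∈ {1,…,n_f}; set P := ∑_{f∈F} a_{1,f} ⊗ ⋯ ⊗ a_{n_f,f}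 ∈ T (each pure tensor lying in the summand of degree n_f). If P ∈ W and m(P) lies in the range of ιU, then ∑_{f∈F} (w_{1,f}+⋯+w_{n_f,f}) • m_{n_f}(a_{1,f} ⊗ ⋯ ⊗ a_{n_f,f}) = ιU( ∑_{f∈F} [a_{1,f},…,a_{n_f−1,f}, w_{n_f,f} • a_{n_f,f}]_L ), the bracket expression being w_{1,f} • a_{1,f} when n_f = 1. -/
/-- Left-iterated Lie bracket `[a₁, …, a_n]_L = ⁅a₁, ⁅a₂, …, ⁅a_{n-1}, a_n⁆…⁆⁆`
(equal to `a₁` for a singleton list, and `0` for the empty list). -/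
def bracketL {L : Type*} [LieRing L] : List L → L
  | [] => 0
  | [z] => z
  | z :: w :: ws => ⁅z, bracketL (w :: ws)⁆

attribute [local instance] LieRing.ofAssociativeRing

/-- The multiplication map `m_n : ⨂ⁿ g → U(g)`, `a₁ ⊗ ⋯ ⊗ a_n ↦ ιU(a₁) ⋯ ιU(a_n)`. -/
noncomputable def mpow (K : Type*) [CommRing K] (g : Type*) [LieRing g] [LieAlgebra K g]
    (n : ℕ) : TensorPower K n g →ₗ[K] UniversalEnvelopingAlgebra K g :=
  PiTensorProduct.lift
    ((MultilinearMap.mkPiAlgebraFin K n (UniversalEnvelopingAlgebra K g)).compLinearMap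
      fun _ => (UniversalEnvelopingAlgebra.ι K).toLinearMap)

/-- The permutation action `P_σ : ⨂ⁿ g → ⨂ⁿ g`, `a₁ ⊗ ⋯ ⊗ a_n ↦ a_{σ(1)} ⊗ ⋯ ⊗ a_{σ(n)}`. -/
noncomputable def permMap (K : Type*) [CommRing K] (g : Type*) [LieRing g] [LieAlgebra K g]
    (n : ℕ) (σ : Equiv.Perm (Fin n)) : TensorPower K n g →ₗ[K] TensorPower K n g :=
  (PiTensorProduct.reindex K (fun _ : Fin n => g) σ).toLinearMap

/-- The total multiplication map `m : ⨁ₙ ⨂ⁿ g → U(g)` restricting to `m_n` on each summand. -/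
noncomputable def mtot (K : Type*) [CommRing K] (g : Type*) [LieRing g] [LieAlgebra K g] :
    (DirectSum ℕ fun n => TensorPower K n g) →ₗ[K] UniversalEnvelopingAlgebra K g :=
  DirectSum.toModule K ℕ (UniversalEnvelopingAlgebra K g) fun n => mpow K g n

/-- The endomorphism of `⨁ₙ ⨂ⁿ g` acting by `f` on the `n`-th summand and by the identity
on all other summands. -/
noncomputable def onSummand (K : Type*) [CommRing K] (g : Type*) [LieRing g] [LieAlgebra K g]
    (n : ℕ) (f : TensorPower K n g →ₗ[K] TensorPower K n g)
    (x : DirectSum ℕ fun m => TensorPower K m g) :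
    DirectSum ℕ fun m => TensorPower K m g :=
  x + DirectSum.lof K ℕ (fun m => TensorPower K m g) n (f (x n) - x n)

/-- The projection of `g` onto the graded piece `G k` coming from the internal direct sum
decomposition `hG`. -/
noncomputable def gradeProj (K : Type*) [CommRing K] [DecidableEq K]
    (g : Type*) [LieRing g] [LieAlgebra K g]
    (G : K → Submodule K g) (hG : DirectSum.IsInternal G) (k : K) : g →ₗ[K] g :=
  (G k).subtype ∘ₗ (DirectSum.component K K (fun i => G i) k) ∘ₗ
    (LinearEquiv.ofBijective (DirectSum.coeLinearMap G) hG).symm.toLinearMap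

@[simp] lemma bracketL_singleton {L : Type*} [LieRing L] (z : L) : bracketL [z] = z := rfl
@[simp] lemma bracketL_cons_cons {L : Type*} [LieRing L] (x y : L) (t : List L) :
    bracketL (x :: y :: t) = ⁅x, bracketL (y :: t)⁆ := rfl

section aux

open UniversalEnvelopingAlgebra TrivSqZeroExt

variable (K : Type*) [CommRing K] [DecidableEq K]
variable (g : Type*) [LieRing g] [LieAlgebra K g]
variable (G : K → Submodule K g) (hG : DirectSum.IsInternal G)

/-- The grading derivation `D : g → g`, acting by `k • ·` on `G k`. -/
noncomputable def Dmap : g →ₗ[K] g :=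
  (DirectSum.toModule K K g fun k => k • (G k).subtype) ∘ₗ
    (LinearEquiv.ofBijective (DirectSum.coeLinearMap G) hG).symm.toLinearMap

lemma Dmap_of_mem {k : K} {x : g} (hx : x ∈ G k) : Dmap K g G hG x = k • x := by
  have h1 : (LinearEquiv.ofBijective (DirectSum.coeLinearMap G) hG).symm x
      = DirectSum.lof K K (fun i => G i) k ⟨x, hx⟩ := by
    apply (LinearEquiv.symm_apply_eq _).mpr
    simp [LinearEquiv.ofBijective_apply, DirectSum.lof_eq_of, DirectSum.coeLinearMap_of]
    exact (DirectSum.coeLinearMap_of (fun i => G i) k ⟨x, hx⟩).symm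
  simp only [Dmap, LinearMap.comp_apply, LinearEquiv.coe_toLinearMap, h1,
    DirectSum.toModule_lof]
  rfl

lemma Dmap_bracket (hGbr : ∀ i j : K, ∀ x ∈ G i, ∀ y ∈ G j, ⁅x, y⁆ ∈ G (i + j)) (x y : g) :
    Dmap K g G hG ⁅x, y⁆ = ⁅Dmap K g G hG x, y⁆ + ⁅x, Dmap K g G hG y⁆ := by
  have htop : ∀ z : g, z ∈ ⨆ k, G k := by
    intro z; rw [hG.submodule_iSup_eq_top]; trivial
  have inner : ∀ i : K, ∀ x ∈ G i, ∀ y : g,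
      Dmap K g G hG ⁅x, y⁆ = ⁅Dmap K g G hG x, y⁆ + ⁅x, Dmap K g G hG y⁆ := by
    intro i x hx y
    refine Submodule.iSup_induction G (motive := fun y =>
      Dmap K g G hG ⁅x, y⁆ = ⁅Dmap K g G hG x, y⁆ + ⁅x, Dmap K g G hG y⁆) (htop y) ?_ ?_ ?_
    · intro j y hy
      rw [Dmap_of_mem K g G hG hx, Dmap_of_mem K g G hG hy,
        Dmap_of_mem K g G hG (hGbr i j x hx y hy), add_smul, smul_lie, lie_smul]
    · simp
    · intro a b hha hhb
      simp only [lie_add, map_add, hha, hhb]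
      abel
  refine Submodule.iSup_induction G (motive := fun x =>
      Dmap K g G hG ⁅x, y⁆ = ⁅Dmap K g G hG x, y⁆ + ⁅x, Dmap K g G hG y⁆) (htop x) ?_ ?_ ?_
  · intro i x hx; exact inner i x hx y
  · simp
  · intro a b hha hhb
    simp only [add_lie, map_add, hha, hhb]
    abel

/-- The operator `τ(x) : (z, c) ↦ (⁅x, z⁆ + c • D x, 0)` on `g × K`. -/
noncomputable def tauEnd (x : g) : Module.End K (g × K) where
  toFun p := (⁅x, p.1⁆ + p.2 • Dmap K g G hG x, (0 : K))
  map_add' p q := by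
    ext
    · simp [add_smul]; abel
    · simp
  map_smul' c p := by
    ext
    · simp [mul_smul, smul_add]
    · simp

/-- `τ` as a Lie algebra homomorphism `g →ₗ⁅K⁆ End(g × K)`. -/
noncomputable def tauLie
    (hbr : ∀ x y : g, Dmap K g G hG ⁅x, y⁆ = ⁅Dmap K g G hG x, y⁆ + ⁅x, Dmap K g G hG y⁆) :
    g →ₗ⁅K⁆ Module.End K (g × K) where
  toFun := tauEnd K g G hG
  map_add' x y := by
    refine LinearMap.ext fun p => Prod.ext ?_ ?_
    · simp [tauEnd, add_lie, add_smul, smul_add]; abel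
    · simp [tauEnd]
  map_smul' c x := by
    refine LinearMap.ext fun p => Prod.ext ?_ ?_
    · simp [tauEnd, smul_lie, smul_comm c p.2, smul_add]
    · simp [tauEnd]
  map_lie' {x y} := by
    refine LinearMap.ext fun p => Prod.ext ?_ ?_
    · simp only [tauEnd, Ring.lie_def, LinearMap.sub_apply, Module.End.mul_apply,
        LinearMap.coe_mk, AddHom.coe_mk, hbr, lie_lie, Prod.fst_sub, smul_add, lie_add,
        lie_smul, zero_smul, add_zero, Prod.snd_sub, smul_zero]
      rw [← lie_skew (Dmap K g G hG x) y]
      simp only [smul_neg]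
      abel
    · simp [tauEnd, Ring.lie_def]

/-- The Lie algebra homomorphism `x ↦ ι x + ι (D x) ε` into the dual numbers over `U(g)`. -/
noncomputable def phiLie
    (hbr : ∀ x y : g, Dmap K g G hG ⁅x, y⁆ = ⁅Dmap K g G hG x, y⁆ + ⁅x, Dmap K g G hG y⁆) :
    g →ₗ⁅K⁆ DualNumber (UniversalEnvelopingAlgebra K g) where
  toFun x := inl (ι K x) + inr (ι K (Dmap K g G hG x))
  map_add' x y := by
    refine TrivSqZeroExt.ext ?_ ?_ <;> simp
  map_smul' c x := by
    refine TrivSqZeroExt.ext ?_ ?_ <;> simp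
  map_lie' {x y} := by
    refine TrivSqZeroExt.ext ?_ ?_
    · simp [Ring.lie_def, LieHom.map_lie]
    · simp only [Ring.lie_def, hbr, map_add, mul_add, add_mul, inl_mul_inl, inl_mul_inr,
        inr_mul_inl, inr_mul_inr, snd_sub, snd_add, snd_inl, snd_inr, add_zero, zero_add]
      have h1 : (ι K (L := g)) ⁅Dmap K g G hG x, y⁆
          = ι K (Dmap K g G hG x) * ι K y - ι K y * ι K (Dmap K g G hG x) := by
        rw [← Ring.lie_def, LieHom.map_lie]
      have h2 : (ι K (L := g)) ⁅x, Dmap K g G hG y⁆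
          = ι K x * ι K (Dmap K g G hG y) - ι K (Dmap K g G hG y) * ι K x := by
        rw [← Ring.lie_def, LieHom.map_lie]
      rw [h1, h2]
      simp only [smul_eq_mul, op_smul_eq_mul]
      abel

lemma mpow_tprod (n : ℕ) (a : Fin n → g) :
    mpow K g n (PiTensorProduct.tprod K a)
      = (List.ofFn fun i => ι K (L := g) (a i)).prod := by
  simp [mpow, MultilinearMap.mkPiAlgebraFin_apply]

lemma psi_list
    (hbr : ∀ x y : g, Dmap K g G hG ⁅x, y⁆ = ⁅Dmap K g G hG x, y⁆ + ⁅x, Dmap K g G hG y⁆)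
    (m : ℕ) :
    ∀ (a : Fin (m + 1) → g) (w : Fin (m + 1) → K),
      (∀ i, Dmap K g G hG (a i) = w i • a i) →
      (UniversalEnvelopingAlgebra.lift K (tauLie K g G hG hbr))
          ((List.ofFn fun i => ι K (L := g) (a i)).prod) (0, 1)
        = (bracketL (List.ofFn fun i => if (i : ℕ) = m then w i • a i else a i), (0 : K)) := by
  induction m with
  | zero =>
    intro a w hw
    simp only [List.ofFn_succ, List.ofFn_zero, List.prod_cons, List.prod_nil, mul_one,
      UniversalEnvelopingAlgebra.lift_ι_apply]
    show (⁅a 0, (0:g)⁆ + (1:K) • Dmap K g G hG (a 0), (0:K)) = _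
    simp [hw 0]
  | succ m ih =>
    intro a w hw
    have hL : (List.ofFn fun i : Fin (m + 2) => if (i : ℕ) = m + 1 then w i • a i else a i)
        = a 0 :: (List.ofFn fun i : Fin (m + 1) =>
            if (i : ℕ) = m then w i.succ • a i.succ else a i.succ) := by
      simp [List.ofFn_succ, Fin.val_succ]
    rw [hL, List.ofFn_succ (f := fun i : Fin (m + 1 + 1) => ι K (L := g) (a i)), List.prod_cons,
      map_mul, Module.End.mul_apply, UniversalEnvelopingAlgebra.lift_ι_apply]
    have h2 := ih (fun i => a i.succ) (fun i => w i.succ) (fun i => hw i.succ)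
    rw [h2]
    rw [List.ofFn_succ (f := fun i : Fin (m + 1) =>
      if (i : ℕ) = m then w i.succ • a i.succ else a i.succ), bracketL_cons_cons]
    show (⁅a 0, _⁆ + (0:K) • Dmap K g G hG (a 0), (0:K)) = _
    simp

lemma phi_list
    (hbr : ∀ x y : g, Dmap K g G hG ⁅x, y⁆ = ⁅Dmap K g G hG x, y⁆ + ⁅x, Dmap K g G hG y⁆)
    (m : ℕ) :
    ∀ (a : Fin (m + 1) → g) (w : Fin (m + 1) → K),
      (∀ i, Dmap K g G hG (a i) = w i • a i) →
      (UniversalEnvelopingAlgebra.lift K (phiLie K g G hG hbr))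
          ((List.ofFn fun i => ι K (L := g) (a i)).prod)
        = inl ((List.ofFn fun i => ι K (L := g) (a i)).prod)
          + inr ((∑ i, w i) • (List.ofFn fun i => ι K (L := g) (a i)).prod) := by
  induction m with
  | zero =>
    intro a w hw
    simp only [List.ofFn_succ, List.ofFn_zero, List.prod_cons, List.prod_nil, mul_one,
      UniversalEnvelopingAlgebra.lift_ι_apply]
    show inl (ι K (a 0)) + inr (ι K (Dmap K g G hG (a 0))) = _
    rw [hw 0, map_smul]
    simp
  | succ m ih =>
    intro a w hw
    rw [List.ofFn_succ (f := fun i : Fin (m + 2) => ι K (L := g) (a i)), List.prod_cons,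
      map_mul, UniversalEnvelopingAlgebra.lift_ι_apply,
      ih (fun i => a i.succ) (fun i => w i.succ) (fun i => hw i.succ)]
    show (inl (ι K (a 0)) + inr (ι K (Dmap K g G hG (a 0)))) * _ = _
    rw [hw 0, map_smul]
    refine TrivSqZeroExt.ext ?_ ?_
    · simp
    · simp only [mul_add, add_mul, inl_mul_inl, inl_mul_inr, inr_mul_inl, inr_mul_inr,
        snd_add, snd_inl, snd_inr, add_zero, zero_add, smul_eq_mul, op_smul_eq_mul,
        Fin.sum_univ_succ, add_smul, smul_smul, mul_smul_comm, smul_mul_assoc]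
      try abel

lemma psi_mpow
    (hbr : ∀ x y : g, Dmap K g G hG ⁅x, y⁆ = ⁅Dmap K g G hG x, y⁆ + ⁅x, Dmap K g G hG y⁆)
    (n : ℕ) (hn : n ≠ 0) (a : Fin n → g) (w : Fin n → K)
    (hw : ∀ i, Dmap K g G hG (a i) = w i • a i) :
    (UniversalEnvelopingAlgebra.lift K (tauLie K g G hG hbr))
        (mpow K g n (PiTensorProduct.tprod K a)) (0, 1)
      = (bracketL (List.ofFn fun i => if (i : ℕ) = n - 1 then w i • a i else a i), (0 : K)) := by
  obtain ⟨m, rfl⟩ := Nat.exists_eq_succ_of_ne_zero hn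
  rw [mpow_tprod]
  simpa using psi_list K g G hG hbr m a w hw

lemma phi_mpow
    (hbr : ∀ x y : g, Dmap K g G hG ⁅x, y⁆ = ⁅Dmap K g G hG x, y⁆ + ⁅x, Dmap K g G hG y⁆)
    (n : ℕ) (hn : n ≠ 0) (a : Fin n → g) (w : Fin n → K)
    (hw : ∀ i, Dmap K g G hG (a i) = w i • a i) :
    (UniversalEnvelopingAlgebra.lift K (phiLie K g G hG hbr))
        (mpow K g n (PiTensorProduct.tprod K a))
      = inl (mpow K g n (PiTensorProduct.tprod K a))
        + inr ((∑ i, w i) • mpow K g n (PiTensorProduct.tprod K a)) := by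
  obtain ⟨m, rfl⟩ := Nat.exists_eq_succ_of_ne_zero hn
  rw [mpow_tprod]
  exact phi_list K g G hG hbr m a w hw

end aux

set_option maxHeartbeats 1000000 in
/-- (Weighted Dynkin–Specht–Wever lemma in the universal enveloping algebra of a graded Lie
algebra.) -/
theorem weighted_DSW_universal_enveloping_graded
    (K : Type*) [CommRing K] [Algebra ℚ K] [DecidableEq K]
    (g : Type*) [LieRing g] [LieAlgebra K g]
    (G : K → Submodule K g) (hG : DirectSum.IsInternal G)
    (hGbr : ∀ i j : K, ∀ x ∈ G i, ∀ y ∈ G j, ⁅x, y⁆ ∈ G (i + j))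
    (W : Submodule K (DirectSum ℕ fun n => TensorPower K n g))
    (hWperm : ∀ (n : ℕ) (σ : Equiv.Perm (Fin n)), ∀ x ∈ W,
      onSummand K g n (permMap K g n σ) x ∈ W)
    (hWproj : ∀ (n : ℕ) (j : Fin n) (k : K), ∀ x ∈ W,
      onSummand K g n
        (PiTensorProduct.map fun i => if i = j then gradeProj K g G hG k else LinearMap.id)
        x ∈ W)
    (hinj : Set.InjOn (mtot K g) (W : Set (DirectSum ℕ fun n => TensorPower K n g)))
    (F : Type*) [Fintype F]
    (n : F → ℕ) (hn : ∀ f, 1 ≤ n f)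
    (wt : (f : F) → Fin (n f) → K)
    (a : (f : F) → Fin (n f) → g)
    (ha : ∀ f i, a f i ∈ G (wt f i))
    (P : DirectSum ℕ fun m => TensorPower K m g)
    (hPdef : P = ∑ f : F,
      DirectSum.lof K ℕ (fun m => TensorPower K m g) (n f) (PiTensorProduct.tprod K (a f)))
    (hPW : P ∈ W)
    (hPg : mtot K g P ∈ Set.range (UniversalEnvelopingAlgebra.ι K (L := g))) :
    ∑ f : F, (∑ i, wt f i) • mpow K g (n f) (PiTensorProduct.tprod K (a f)) =
      UniversalEnvelopingAlgebra.ι K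
        (∑ f : F, bracketL (List.ofFn fun i : Fin (n f) =>
          if (i : ℕ) = n f - 1 then wt f i • a f i else a f i)) := by
  classical
  obtain ⟨x, hx⟩ := hPg
  have hbr : ∀ u v : g,
      Dmap K g G hG ⁅u, v⁆ = ⁅Dmap K g G hG u, v⁆ + ⁅u, Dmap K g G hG v⁆ :=
    Dmap_bracket K g G hG hGbr
  have hw : ∀ f i, Dmap K g G hG (a f i) = wt f i • a f i :=
    fun f i => Dmap_of_mem K g G hG (ha f i)
  have hm : mtot K g P = ∑ f : F, mpow K g (n f) (PiTensorProduct.tprod K (a f)) := by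
    rw [hPdef]
    unfold mtot
    rw [map_sum]
    exact Finset.sum_congr rfl fun f _ =>
      DirectSum.toModule_lof (R := K) (ι := ℕ) (M := fun m => TensorPower K m g)
        (N := UniversalEnvelopingAlgebra K g) (φ := fun m => mpow K g m) (n f)
        (PiTensorProduct.tprod K (a f))
  set Ψ := UniversalEnvelopingAlgebra.lift K (tauLie K g G hG hbr) with hΨ
  set Φ := UniversalEnvelopingAlgebra.lift K (phiLie K g G hG hbr) with hΦ
  -- the value of D on x
  have hDx : Dmap K g G hG x = ∑ f : F, bracketL (List.ofFn fun i : Fin (n f) =>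
      if (i : ℕ) = n f - 1 then wt f i • a f i else a f i) := by
    have e1 : (Ψ (UniversalEnvelopingAlgebra.ι K x) (0, 1)).1 = Dmap K g G hG x := by
      rw [hΨ, UniversalEnvelopingAlgebra.lift_ι_apply]
      show (⁅x, (0 : g)⁆ + (1 : K) • Dmap K g G hG x, (0 : K)).1 = _
      simp
    rw [← e1, hx, hm, map_sum, LinearMap.coe_sum, Finset.sum_apply, Prod.fst_sum]
    exact Finset.sum_congr rfl fun f _ => by
      rw [hΨ, psi_mpow K g G hG hbr (n f) (Nat.one_le_iff_ne_zero.mp (hn f)) (a f) (wt f)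
        (hw f)]
  calc
    ∑ f : F, (∑ i, wt f i) • mpow K g (n f) (PiTensorProduct.tprod K (a f))
        = ∑ f : F, TrivSqZeroExt.snd
            (Φ (mpow K g (n f) (PiTensorProduct.tprod K (a f)))) := by
          refine Finset.sum_congr rfl fun f _ => ?_
          rw [hΦ, phi_mpow K g G hG hbr (n f) (Nat.one_le_iff_ne_zero.mp (hn f)) (a f) (wt f)
            (hw f)]
          simp
    _ = TrivSqZeroExt.snd (Φ (mtot K g P)) := by
          rw [hm, map_sum, TrivSqZeroExt.snd_sum]
    _ = UniversalEnvelopingAlgebra.ι K (Dmap K g G hG x) := by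
          rw [← hx, hΦ, UniversalEnvelopingAlgebra.lift_ι_apply]
          show TrivSqZeroExt.snd (TrivSqZeroExt.inl (UniversalEnvelopingAlgebra.ι K x)
            + TrivSqZeroExt.inr (UniversalEnvelopingAlgebra.ι K (Dmap K g G hG x))) = _
          simp
    _ = _ := by rw [hDx]
end

section
/- (Magnus–Witt theorem over ℚ-algebras.) Let K be a commutative ring which is a ℚ-algebra and Λ a type. Then the canonical Lie algebra morphism ι : FreeLieAlgebra K Λ → FreeAlgebra K Λ, where FreeAlgebra K Λ carries the commutator Lie bracket ⁅a,b⁆ = a*b − b*a and ι sends each generator of the free Lie algebra to the corresponding generator of the free associative algebra, is injective. -/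
attribute [local instance 100] LieRing.ofAssociativeRing

/-- The canonical Lie algebra morphism from the free Lie algebra to the free associative
algebra (with commutator bracket), sending each generator to the corresponding generator. -/
noncomputable def iotaLie (K : Type*) [CommRing K] (Λ : Type*) :
    FreeLieAlgebra K Λ →ₗ⁅K⁆ FreeAlgebra K Λ :=
  FreeLieAlgebra.lift K (FreeAlgebra.ι K)

namespace MagnusWittAux

variable (K : Type*) [CommRing K] (Λ : Type*)

local notation "L" => FreeLieAlgebra K Λ
local notation "A" => FreeAlgebra K Λ

/-- If a Lie subalgebra of the free Lie algebra contains all generators, it is everything. -/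
theorem mem_of_forall_of (S : LieSubalgebra K (FreeLieAlgebra K Λ))
    (h : ∀ x, FreeLieAlgebra.of K x ∈ S) (u : FreeLieAlgebra K Λ) : u ∈ S := by
  let g : FreeLieAlgebra K Λ →ₗ⁅K⁆ S :=
    FreeLieAlgebra.lift K fun x => (⟨FreeLieAlgebra.of K x, h x⟩ : S)
  have key : S.incl.comp g = LieHom.id := by
    apply FreeLieAlgebra.hom_ext
    intro x
    simp [g, FreeLieAlgebra.lift_of_apply]
  have h2 := LieHom.congr_fun key u
  simp only [LieHom.comp_apply, LieHom.id_apply] at h2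
  rw [← h2]
  exact (g u).2

/-- The algebra morphism `A → End L` sending a generator to the adjoint action of the
corresponding generator of the free Lie algebra. -/
noncomputable def phi : FreeAlgebra K Λ →ₐ[K] Module.End K (FreeLieAlgebra K Λ) :=
  FreeAlgebra.lift K fun x =>
    (LieAlgebra.ad K (FreeLieAlgebra K Λ) (FreeLieAlgebra.of K x) : _)

theorem phi_iota (u v : FreeLieAlgebra K Λ) :
    phi K Λ (iotaLie K Λ u) v = ⁅u, v⁆ := by
  have key : ((phi K Λ).toLieHom).comp (iotaLie K Λ)
      = LieAlgebra.ad K (FreeLieAlgebra K Λ) := by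
    apply FreeLieAlgebra.hom_ext
    intro x
    simp [iotaLie, FreeLieAlgebra.lift_of_apply, phi]
  have h1 := LieHom.congr_fun key u
  simp only [LieHom.comp_apply] at h1
  have h2 := LinearMap.congr_fun h1 v
  simpa [LieAlgebra.ad_apply] using h2

/-- Generator of the auxiliary representation used to define the Dynkin map. -/
noncomputable def psiGen (x : Λ) :
    (K × FreeLieAlgebra K Λ) →ₗ[K] (K × FreeLieAlgebra K Λ) where
  toFun p := (0, p.1 • FreeLieAlgebra.of K x + ⁅FreeLieAlgebra.of K x, p.2⁆)
  map_add' p q := by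
    ext
    · simp
    · simp [add_smul]; abel
  map_smul' c p := by
    ext
    · simp
    · simp [mul_smul, smul_add]

/-- The auxiliary representation used to define the Dynkin map. -/
noncomputable def psi :
    FreeAlgebra K Λ →ₐ[K] Module.End K (K × FreeLieAlgebra K Λ) :=
  FreeAlgebra.lift K (psiGen K Λ)

/-- The Dynkin map `A → L`. -/
noncomputable def Dmap : FreeAlgebra K Λ →ₗ[K] FreeLieAlgebra K Λ where
  toFun a := (psi K Λ a (1, 0)).2
  map_add' a b := by simp
  map_smul' c a := by simp

theorem psi_inr (a : FreeAlgebra K Λ) (u : FreeLieAlgebra K Λ) :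
    psi K Λ a (0, u) = (0, phi K Λ a u) := by
  induction a using FreeAlgebra.induction generalizing u with
  | grade0 c =>
      simp [Algebra.algebraMap_eq_smul_one, Prod.smul_def]
  | grade1 x =>
      simp [psi, phi, FreeAlgebra.lift_ι_apply, psiGen]
  | mul a b ha hb =>
      simp [Module.End.mul_apply, ha, hb]
  | add a b ha hb =>
      simp [ha, hb, Prod.ext_iff]

theorem Dmap_iota_of (x : Λ) :
    Dmap K Λ (iotaLie K Λ (FreeLieAlgebra.of K x)) = FreeLieAlgebra.of K x := by
  simp [Dmap, iotaLie, FreeLieAlgebra.lift_of_apply, psi, psiGen, FreeAlgebra.lift_ι_apply]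

theorem Dmap_mul_iota_of (a : FreeAlgebra K Λ) (x : Λ) :
    Dmap K Λ (a * iotaLie K Λ (FreeLieAlgebra.of K x))
      = phi K Λ a (FreeLieAlgebra.of K x) := by
  have h : iotaLie K Λ (FreeLieAlgebra.of K x) = FreeAlgebra.ι K x := by
    simp [iotaLie, FreeLieAlgebra.lift_of_apply]
  have h2 : psi K Λ (FreeAlgebra.ι K x) (1, 0) = (0, FreeLieAlgebra.of K x) := by
    simp [psi, FreeAlgebra.lift_ι_apply, psiGen]
  simp only [Dmap, h, LinearMap.coe_mk, AddHom.coe_mk, map_mul, Module.End.mul_apply, h2,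
    psi_inr]

/-- The key Dynkin–Specht–Wever identity. -/
theorem dsw_mul (u : FreeLieAlgebra K Λ) (a : FreeAlgebra K Λ) :
    Dmap K Λ (a * iotaLie K Λ u) = phi K Λ a (Dmap K Λ (iotaLie K Λ u)) := by
  let S : LieSubalgebra K (FreeLieAlgebra K Λ) :=
    { carrier := {u | ∀ a, Dmap K Λ (a * iotaLie K Λ u)
        = phi K Λ a (Dmap K Λ (iotaLie K Λ u))}
      add_mem' := by
        intro u v hu hv a
        rw [map_add (iotaLie K Λ), mul_add, map_add, hu a, hv a, map_add, map_add]
      zero_mem' := by intro a; simp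
      smul_mem' := by
        intro c u hu a
        rw [map_smul (iotaLie K Λ), mul_smul_comm, map_smul, hu a, map_smul, map_smul]
      lie_mem' := by
        intro u v hu hv a
        have hlie : iotaLie K Λ ⁅u, v⁆
            = iotaLie K Λ u * iotaLie K Λ v - iotaLie K Λ v * iotaLie K Λ u := by
          rw [LieHom.map_lie, Ring.lie_def]
        rw [hlie, mul_sub, map_sub, map_sub, ← mul_assoc, ← mul_assoc, hv _, hu _,
          hu _, hv _]
        simp [map_mul, Module.End.mul_apply, map_sub] }
  exact mem_of_forall_of K Λ S
    (fun x a => by rw [Dmap_mul_iota_of, Dmap_iota_of]) u a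

theorem dsw_lie (u v : FreeLieAlgebra K Λ) :
    Dmap K Λ (iotaLie K Λ ⁅u, v⁆)
      = ⁅u, Dmap K Λ (iotaLie K Λ v)⁆ - ⁅v, Dmap K Λ (iotaLie K Λ u)⁆ := by
  have h : iotaLie K Λ ⁅u, v⁆
      = iotaLie K Λ u * iotaLie K Λ v - iotaLie K Λ v * iotaLie K Λ u := by
    rw [LieHom.map_lie, Ring.lie_def]
  rw [h, map_sub, dsw_mul, dsw_mul, phi_iota, phi_iota]


/-! ### Grading bookkeeping via the tensor algebra -/

theorem sum_triangle {M : Type*} [AddCommMonoid M] (f : ℕ → ℕ → M) (N : ℕ) :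
    ∑ n ∈ Finset.range N, ∑ p ∈ Finset.range (n + 1), f p (n - p)
      = ∑ p ∈ Finset.range N, ∑ q ∈ Finset.range (N - p), f p q := by
  induction N with
  | zero => simp
  | succ m ih =>
    rw [Finset.sum_range_succ, ih,
      Finset.sum_range_succ (fun p => ∑ q ∈ Finset.range (m + 1 - p), f p q) m]
    have h1 : m + 1 - m = 1 := by omega
    rw [h1, Finset.sum_range_one]
    have key : ∀ p ∈ Finset.range m, ∑ q ∈ Finset.range (m + 1 - p), f p q
        = ∑ q ∈ Finset.range (m - p), f p q + f p (m - p) := by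
      intro p hp
      have h2 : m + 1 - p = (m - p) + 1 := by
        simp only [Finset.mem_range] at hp; omega
      rw [h2, Finset.sum_range_succ]
    rw [Finset.sum_congr rfl key, Finset.sum_add_distrib,
      Finset.sum_range_succ (fun p => f p (m - p)) m, Nat.sub_self]
    abel

theorem sum_ext {M : Type*} [AddCommMonoid M] (c : ℕ → M) (N M₀ : ℕ) (h : N ≤ M₀)
    (hc : ∀ n, N < n → c n = 0) :
    ∑ n ∈ Finset.range (M₀ + 1), c n = ∑ n ∈ Finset.range (N + 1), c n :=
  (Finset.sum_subset (by intro x hx; simp only [Finset.mem_range] at *; omega)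
    (fun x hx hnx => by
      refine hc x ?_
      simp only [Finset.mem_range] at *
      omega)).symm

theorem sum_lie_sum (s t : Finset ℕ) (f g : ℕ → FreeLieAlgebra K Λ) :
    ⁅∑ p ∈ s, f p, ∑ q ∈ t, g q⁆ = ∑ p ∈ s, ∑ q ∈ t, ⁅f p, g q⁆ := by
  have h1 : ∀ (w : FreeLieAlgebra K Λ) (t' : Finset ℕ) (g' : ℕ → FreeLieAlgebra K Λ),
      ⁅w, ∑ q ∈ t', g' q⁆ = ∑ q ∈ t', ⁅w, g' q⁆ := by
    intro w t' g'
    have h := map_sum (LieAlgebra.ad K (FreeLieAlgebra K Λ) w) g' t'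
    simpa only [LieAlgebra.ad_apply] using h
  have h2 : ∀ (w : FreeLieAlgebra K Λ) (s' : Finset ℕ) (f' : ℕ → FreeLieAlgebra K Λ),
      ⁅∑ p ∈ s', f' p, w⁆ = ∑ p ∈ s', ⁅f' p, w⁆ := by
    intro w s' f'
    rw [← lie_skew, h1, ← Finset.sum_neg_distrib]
    exact Finset.sum_congr rfl fun p _ => lie_skew _ _
  rw [h2]
  exact Finset.sum_congr rfl fun p _ => h1 _ _ _

/-- The grading of the tensor algebra. -/
noncomputable abbrev gr : ℕ → Submodule K (TensorAlgebra K (Λ →₀ K)) :=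
  fun n => LinearMap.range
    (TensorAlgebra.ι K : (Λ →₀ K) →ₗ[K] TensorAlgebra K (Λ →₀ K)) ^ n

/-- The identification of the free algebra with a tensor algebra. -/
noncomputable def eqv : TensorAlgebra K (Λ →₀ K) ≃ₐ[K] FreeAlgebra K Λ :=
  TensorAlgebra.equivFreeAlgebra Finsupp.basisSingleOne

/-- `w` behaves like a homogeneous element of degree `n`. -/
def Pn (n : ℕ) (w : FreeLieAlgebra K Λ) : Prop :=
  (eqv K Λ).symm (iotaLie K Λ w) ∈ gr K Λ n ∧
    Dmap K Λ (iotaLie K Λ w) = (n : K) • w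

theorem Pn_zero (n : ℕ) : Pn K Λ n 0 := by
  constructor <;> simp [Pn]

theorem Pn_add (n : ℕ) (w₁ w₂ : FreeLieAlgebra K Λ) (h₁ : Pn K Λ n w₁)
    (h₂ : Pn K Λ n w₂) : Pn K Λ n (w₁ + w₂) := by
  refine ⟨?_, ?_⟩
  · rw [map_add (iotaLie K Λ), map_add]
    exact add_mem h₁.1 h₂.1
  · rw [map_add (iotaLie K Λ), map_add, h₁.2, h₂.2, smul_add]

theorem Pn_smul (n : ℕ) (k : K) (w : FreeLieAlgebra K Λ) (h : Pn K Λ n w) :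
    Pn K Λ n (k • w) := by
  refine ⟨?_, ?_⟩
  · rw [map_smul (iotaLie K Λ), map_smul]
    exact Submodule.smul_mem _ _ h.1
  · rw [map_smul (iotaLie K Λ), map_smul, h.2, smul_comm]

theorem lie_smul' (q : K) (w₁ w₂ : FreeLieAlgebra K Λ) :
    ⁅w₁, q • w₂⁆ = q • ⁅w₁, w₂⁆ := by
  have h := (LieAlgebra.ad K (FreeLieAlgebra K Λ) w₁).map_smul q w₂
  simpa only [LieAlgebra.ad_apply] using h

theorem Pn_sum (n : ℕ) (s : Finset ℕ) (f : ℕ → FreeLieAlgebra K Λ)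
    (hf : ∀ p ∈ s, Pn K Λ n (f p)) : Pn K Λ n (∑ p ∈ s, f p) :=
  Finset.sum_induction f (Pn K Λ n) (fun a b ha hb => Pn_add K Λ n a b ha hb)
    (Pn_zero K Λ n) hf

theorem Pn_lie (p q : ℕ) (w₁ w₂ : FreeLieAlgebra K Λ) (h₁ : Pn K Λ p w₁)
    (h₂ : Pn K Λ q w₂) : Pn K Λ (p + q) ⁅w₁, w₂⁆ := by
  have hlie : iotaLie K Λ ⁅w₁, w₂⁆
      = iotaLie K Λ w₁ * iotaLie K Λ w₂ - iotaLie K Λ w₂ * iotaLie K Λ w₁ := by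
    rw [LieHom.map_lie, Ring.lie_def]
  refine ⟨?_, ?_⟩
  · rw [hlie, map_sub, map_mul, map_mul]
    have hpq : gr K Λ (p + q) = gr K Λ p * gr K Λ q := pow_add _ p q
    have hqp : gr K Λ (p + q) = gr K Λ q * gr K Λ p := by
      rw [add_comm p q]; exact pow_add _ q p
    refine sub_mem ?_ ?_
    · rw [hpq]; exact Submodule.mul_mem_mul h₁.1 h₂.1
    · rw [hqp]; exact Submodule.mul_mem_mul h₂.1 h₁.1
  · rw [dsw_lie, h₁.2, h₂.2]
    have e1 : ⁅w₁, (q : K) • w₂⁆ = (q : K) • ⁅w₁, w₂⁆ := lie_smul' K Λ _ _ _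
    have e2 : ⁅w₂, (p : K) • w₁⁆ = (p : K) • ⁅w₂, w₁⁆ := lie_smul' K Λ _ _ _
    have e3 : ⁅w₂, w₁⁆ = -⁅w₁, w₂⁆ := by rw [← lie_skew]
    rw [e1, e2, e3, smul_neg, sub_neg_eq_add, ← add_smul, Nat.cast_add,
      add_comm (q : K) (p : K)]

theorem Pn_of (x : Λ) : Pn K Λ 1 (FreeLieAlgebra.of K x) := by
  have h : iotaLie K Λ (FreeLieAlgebra.of K x) = FreeAlgebra.ι K x := by
    simp [iotaLie, FreeLieAlgebra.lift_of_apply]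
  refine ⟨?_, ?_⟩
  · rw [h]
    have : (eqv K Λ).symm (FreeAlgebra.ι K x)
        = TensorAlgebra.ι K (Finsupp.basisSingleOne x) :=
      TensorAlgebra.equivFreeAlgebra_symm_ι _ x
    have hg : gr K Λ 1 = LinearMap.range
        (TensorAlgebra.ι K : (Λ →₀ K) →ₗ[K] TensorAlgebra K (Λ →₀ K)) := pow_one _
    rw [this, hg]
    exact LinearMap.mem_range_self _ _
  · rw [Dmap_iota_of, Nat.cast_one, one_smul]

/-- Every element of the free Lie algebra decomposes into homogeneous pieces. -/
theorem exists_decomposition (u : FreeLieAlgebra K Λ) :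
    ∃ (N : ℕ) (c : ℕ → FreeLieAlgebra K Λ),
      u = ∑ n ∈ Finset.range (N + 1), c n ∧ c 0 = 0 ∧
      (∀ n, N < n → c n = 0) ∧ ∀ n, Pn K Λ n (c n) := by
  let S : LieSubalgebra K (FreeLieAlgebra K Λ) :=
    { carrier := {u | ∃ (N : ℕ) (c : ℕ → FreeLieAlgebra K Λ),
        u = ∑ n ∈ Finset.range (N + 1), c n ∧ c 0 = 0 ∧
        (∀ n, N < n → c n = 0) ∧ ∀ n, Pn K Λ n (c n)}
      add_mem' := by
        rintro u v ⟨N₁, c₁, hu, h01, hb1, hP1⟩ ⟨N₂, c₂, hv, h02, hb2, hP2⟩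
        refine ⟨max N₁ N₂, fun n => c₁ n + c₂ n, ?_, by simp [h01, h02],
          fun n hn => by simp [hb1 n (by omega), hb2 n (by omega)],
          fun n => Pn_add K Λ n _ _ (hP1 n) (hP2 n)⟩
        rw [Finset.sum_add_distrib,
          sum_ext c₁ N₁ (max N₁ N₂) (le_max_left _ _) hb1,
          sum_ext c₂ N₂ (max N₁ N₂) (le_max_right _ _) hb2, hu, hv]
      zero_mem' := by
        exact ⟨0, fun _ => 0, by simp, rfl, fun _ _ => rfl, fun n => Pn_zero K Λ n⟩
      smul_mem' := by
        rintro k u ⟨N, c, hu, h0, hb, hP⟩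
        refine ⟨N, fun n => k • c n, ?_, by simp [h0],
          fun n hn => by simp [hb n hn],
          fun n => Pn_smul K Λ n k _ (hP n)⟩
        rw [hu, Finset.smul_sum]
      lie_mem' := by
        rintro u v ⟨N₁, c₁, hu, h01, hb1, hP1⟩ ⟨N₂, c₂, hv, h02, hb2, hP2⟩
        refine ⟨N₁ + N₂, fun n => ∑ p ∈ Finset.range (n + 1), ⁅c₁ p, c₂ (n - p)⁆,
          ?_, by simp [h01], ?_, ?_⟩
        · -- the convolution identity
          rw [hu, hv, sum_lie_sum, sum_triangle (fun p q => ⁅c₁ p, c₂ q⁆) (N₁ + N₂ + 1)]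
          rw [Finset.sum_subset
            (show Finset.range (N₁ + 1) ⊆ Finset.range (N₁ + N₂ + 1) by
              intro x hx; simp only [Finset.mem_range] at *; omega)
            (fun p hp hpn => by
              simp only [Finset.mem_range, not_lt] at hpn
              have h1 : c₁ p = 0 := hb1 p (by omega)
              simp [h1])]
          refine Finset.sum_congr rfl fun p hp => ?_
          simp only [Finset.mem_range] at hp
          by_cases hpN : p ≤ N₁
          · rw [Finset.sum_subset
              (show Finset.range (N₂ + 1) ⊆ Finset.range (N₁ + N₂ + 1 - p) by
                intro x hx; simp only [Finset.mem_range] at hx ⊢; omega)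
              (fun q hq hqn => by
                simp only [Finset.mem_range, not_lt] at hqn
                have h1 : c₂ q = 0 := hb2 q (by omega)
                simp [h1])]
          · have h1 : c₁ p = 0 := hb1 p (by omega)
            simp [h1]
        · intro n hn
          refine Finset.sum_eq_zero fun p hp => ?_
          simp only [Finset.mem_range] at hp
          by_cases hpN : p ≤ N₁
          · have : c₂ (n - p) = 0 := hb2 _ (by omega)
            rw [this, lie_zero]
          · rw [hb1 p (by omega), zero_lie]
        · intro n
          refine Pn_sum K Λ n _ _ fun p hp => ?_
          simp only [Finset.mem_range] at hp
          have h1 := Pn_lie K Λ p (n - p) _ _ (hP1 p) (hP2 (n - p))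
          rwa [show p + (n - p) = n by omega] at h1
        }
  exact mem_of_forall_of K Λ S
    (fun x => ⟨1, fun n => if n = 1 then FreeLieAlgebra.of K x else 0, by simp,
      by simp, fun n hn => by simp [show n ≠ 1 by omega], fun n => by
        by_cases h : n = 1
        · subst h; simpa using Pn_of K Λ x
        · simpa [h] using Pn_zero K Λ n⟩) u

end MagnusWittAux


set_option synthInstance.maxHeartbeats 1000000 in
set_option maxHeartbeats 1000000 in
/-- (Magnus–Witt theorem over ℚ-algebras.) The canonical Lie algebra morphism
`ι : FreeLieAlgebra K Λ → FreeAlgebra K Λ` is injective. -/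
theorem magnus_witt (K : Type*) [CommRing K] [Algebra ℚ K] (Λ : Type*) :
    Function.Injective (iotaLie K Λ) := by
  open MagnusWittAux in
  intro a b hab
  rw [← sub_eq_zero]
  set u := a - b with hu_def
  have hu : iotaLie K Λ u = 0 := by
    have h5 := (iotaLie K Λ).toLinearMap.map_sub a b
    simp only [LieHom.coe_toLinearMap] at h5
    rw [hu_def, h5, hab, sub_self]
  obtain ⟨N, c, hdec, h0, hb, hP⟩ := exists_decomposition K Λ u
  -- each graded piece of the image vanishes
  have hm : ∀ m, (eqv K Λ).symm (iotaLie K Λ (c m)) = 0 := by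
    intro m
    by_cases hmN : m ≤ N
    · have hsum : ∑ n ∈ Finset.range (N + 1),
          (eqv K Λ).symm (iotaLie K Λ (c n)) = 0 := by
        have h2 : ∑ n ∈ Finset.range (N + 1), iotaLie K Λ (c n) = iotaLie K Λ u := by
          rw [hdec]
          have h3 := map_sum (iotaLie K Λ).toLinearMap c (Finset.range (N + 1))
          simpa only [LieHom.coe_toLinearMap] using h3.symm
        rw [← map_sum ((eqv K Λ).symm) (fun n => iotaLie K Λ (c n)) (Finset.range (N + 1)),
          h2, hu, map_zero]
      have h1 := congrArg (fun x => GradedAlgebra.proj (gr K Λ) m x) hsum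
      simp only [map_zero, map_sum] at h1
      rw [Finset.sum_eq_single_of_mem m (Finset.mem_range.2 (by omega))] at h1
      · rwa [GradedAlgebra.proj_apply,
          DirectSum.decompose_of_mem_same (gr K Λ) (hP m).1] at h1
      · intro n _ hne
        rw [GradedAlgebra.proj_apply,
          DirectSum.decompose_of_mem_ne (gr K Λ) (hP n).1 hne]
    · rw [hb m (by omega)]
      simp
  -- hence each Lie component vanishes
  have hc : ∀ m, 1 ≤ m → c m = 0 := by
    intro m hm1
    have hι : iotaLie K Λ (c m) = 0 := by
      apply (eqv K Λ).symm.injective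
      rw [hm m, map_zero]
    have hD : (m : K) • c m = 0 := by
      rw [← (hP m).2, hι, map_zero]
    have hunit : IsUnit (m : K) := by
      have h4 : algebraMap ℚ K ((m : ℚ)) = (m : K) := map_natCast _ m
      rw [← h4]
      refine IsUnit.map (algebraMap ℚ K).toMonoidHom ?_
      exact isUnit_iff_ne_zero.2 (Nat.cast_ne_zero.2 (by omega))
    obtain ⟨k, hk⟩ := hunit.exists_left_inv
    calc c m = (1 : K) • c m := (one_smul _ _).symm
    _ = (k * (m : K)) • c m := by rw [hk]
    _ = k • ((m : K) • c m) := mul_smul _ _ _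
    _ = 0 := by rw [hD, smul_zero]
  rw [hdec]
  refine Finset.sum_eq_zero fun n hn => ?_
  rcases Nat.eq_zero_or_pos n with h | h
  · simp [h, h0]
  · exact hc n h
end

section
/- (Dynkin's formula for the Baker–Campbell–Hausdorff series, in homogeneous components.) For every integer m ≥ 1, the following identity holds in FreeAlgebra ℚ (Fin 2): ∑_{k=1}^{m} ((−1)^{k−1}/k) ∑_{(p,q)} (∏_{i=1}^{k} 1/(p_i!·q_i!)) · W(p,q) = (1/m) · ∑_{k=1}^{m} ((−1)^{k−1}/k) ∑_{(p,q)} (∏_{i=1}^{k} 1/(p_i!·q_i!)) · L(p,q), where in both sums (p,q) ranges over all pairs of tuples p, q : {1,…,k} → ℕ with p_i + q_i ≥ 1 for every i and ∑_{i=1}^{k}(p_i + q_i) = m. -/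
/-- The generator `X` of `FreeAlgebra ℚ (Fin 2)`. -/
noncomputable def Xg : FreeAlgebra ℚ (Fin 2) := FreeAlgebra.ι ℚ 0

/-- The generator `Y` of `FreeAlgebra ℚ (Fin 2)`. -/
noncomputable def Yg : FreeAlgebra ℚ (Fin 2) := FreeAlgebra.ι ℚ 1

/-- The associative monomial `W(p,q) = X^{p₁} Y^{q₁} ⋯ X^{p_k} Y^{q_k}`. -/
noncomputable def bchWord (k : ℕ) (pq : Fin k → ℕ × ℕ) : FreeAlgebra ℚ (Fin 2) :=
  (List.ofFn fun i => Xg ^ (pq i).1 * Yg ^ (pq i).2).prod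

/-- The list consisting of `p₁` copies of `X`, then `q₁` copies of `Y`, …, then `p_k` copies
of `X`, then `q_k` copies of `Y`. -/
noncomputable def bchList (k : ℕ) (pq : Fin k → ℕ × ℕ) : List (FreeAlgebra ℚ (Fin 2)) :=
  (List.ofFn fun i => List.replicate (pq i).1 Xg ++ List.replicate (pq i).2 Yg).flatten

/-- The set of pairs of tuples `p, q : Fin k → ℕ` with `p i + q i ≥ 1` for all `i` and
`∑ i, (p i + q i) = m` (realized inside a large enough finite set of tuples). -/
noncomputable def bchIdx (k m : ℕ) : Finset (Fin k → ℕ × ℕ) :=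
  (Fintype.piFinset fun _ => Finset.range (m + 1) ×ˢ Finset.range (m + 1)).filter
    fun pq => (∀ i, 1 ≤ (pq i).1 + (pq i).2) ∧ ∑ i, ((pq i).1 + (pq i).2) = m

attribute [local instance] LieRing.ofAssociativeRing

namespace DynkinProof
open FreeAlgebra TensorProduct MulOpposite
noncomputable section

abbrev A := FreeAlgebra ℚ (Fin 2)
abbrev TA := A ⊗[ℚ] A

/-- coproduct -/
def Δ : A →ₐ[ℚ] TA := FreeAlgebra.lift ℚ fun i => ι ℚ i ⊗ₜ[ℚ] 1 + 1 ⊗ₜ[ℚ] ι ℚ i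
/-- antipode, as map into the opposite algebra -/
def Sa : A →ₐ[ℚ] Aᵐᵒᵖ := FreeAlgebra.lift ℚ fun i => op (-(ι ℚ i))
/-- antipode -/
def Sl : A →ₗ[ℚ] A := (opLinearEquiv ℚ).symm.toLinearMap ∘ₗ Sa.toLinearMap
/-- number-operator as map into dual numbers -/
def NΨ : A →ₐ[ℚ] TrivSqZeroExt A A := FreeAlgebra.lift ℚ fun i => TrivSqZeroExt.inl (ι ℚ i) + TrivSqZeroExt.inr (ι ℚ i)
/-- number operator (grading derivation) -/
def Nd : A →ₗ[ℚ] A where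
  toFun a := (NΨ a).snd
  map_add' a b := by simp
  map_smul' c a := by simp

def Fl : TA →ₗ[ℚ] A := LinearMap.mul' ℚ A ∘ₗ TensorProduct.map LinearMap.id Sl
def Gl : TA →ₗ[ℚ] A := LinearMap.mul' ℚ A ∘ₗ TensorProduct.map Nd Sl
/-- the Dynkin operator -/
def Dl : A →ₗ[ℚ] A := Gl ∘ₗ Δ.toLinearMap

@[simp] lemma Δ_ι (i : Fin 2) : Δ (ι ℚ i) = ι ℚ i ⊗ₜ[ℚ] 1 + 1 ⊗ₜ[ℚ] ι ℚ i := by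
  simp [Δ]

@[simp] lemma Sl_one : Sl 1 = 1 := by simp [Sl]

@[simp] lemma Sl_ι (i : Fin 2) : Sl (ι ℚ i) = -(ι ℚ i) := by simp [Sl, Sa]

lemma Sl_mul (a b : A) : Sl (a * b) = Sl b * Sl a := by
  simp only [Sl, LinearMap.comp_apply, AlgHom.toLinearMap_apply, map_mul]
  rfl

lemma NΨ_fst (a : A) : (NΨ a).fst = a := by
  have h : (TrivSqZeroExt.fstHom ℚ A A).comp NΨ = AlgHom.id ℚ A := by
    apply FreeAlgebra.hom_ext; funext i; simp [NΨ]
  exact DFunLike.congr_fun h a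

lemma Nd_mul (a b : A) : Nd (a * b) = a * Nd b + Nd a * b := by
  have h2 := congrArg TrivSqZeroExt.snd (map_mul NΨ a b)
  rw [TrivSqZeroExt.snd_mul] at h2
  simp only [NΨ_fst, smul_eq_mul, op_smul_eq_mul] at h2
  exact h2

@[simp] lemma Nd_one : Nd (1 : A) = 0 := by
  have : NΨ (1 : A) = 1 := map_one _
  show (NΨ (1:A)).snd = 0
  rw [this]; rfl

@[simp] lemma Nd_ι (i : Fin 2) : Nd (ι ℚ i) = ι ℚ i := by
  show (NΨ (ι ℚ i)).snd = ι ℚ i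
  simp [NΨ]

@[simp] lemma Fl_tmul (a b : A) : Fl (a ⊗ₜ[ℚ] b) = a * Sl b := by
  simp [Fl]

@[simp] lemma Gl_tmul (a b : A) : Gl (a ⊗ₜ[ℚ] b) = Nd a * Sl b := by
  simp [Gl]

lemma Fl_gen_mul (i : Fin 2) (t : TA) :
    Fl ((ι ℚ i ⊗ₜ[ℚ] 1 + 1 ⊗ₜ[ℚ] ι ℚ i) * t) = ι ℚ i * Fl t - Fl t * ι ℚ i := by
  induction t using TensorProduct.induction_on with
  | zero => simp
  | tmul a b =>
      simp only [add_mul, Algebra.TensorProduct.tmul_mul_tmul, one_mul, mul_one, map_add,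
        Fl_tmul, Sl_mul, Sl_ι]
      noncomm_ring
  | add x y hx hy =>
      simp only [mul_add, map_add, hx, hy]; noncomm_ring

lemma Gl_gen_mul (i : Fin 2) (t : TA) :
    Gl ((ι ℚ i ⊗ₜ[ℚ] 1 + 1 ⊗ₜ[ℚ] ι ℚ i) * t) =
      ι ℚ i * Fl t + (ι ℚ i * Gl t - Gl t * ι ℚ i) := by
  induction t using TensorProduct.induction_on with
  | zero => simp
  | tmul a b =>
      simp only [add_mul, Algebra.TensorProduct.tmul_mul_tmul, one_mul, mul_one, map_add,
        Gl_tmul, Fl_tmul, Sl_mul, Sl_ι, Nd_mul, Nd_ι]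
      noncomm_ring
  | add x y hx hy =>
      simp only [mul_add, map_add, hx, hy]; noncomm_ring

/-- product of generators indexed by a list -/
def wl (l : List (Fin 2)) : A := (l.map (ι ℚ)).prod

@[simp] lemma wl_nil : wl [] = 1 := rfl

lemma wl_cons (i : Fin 2) (t : List (Fin 2)) : wl (i :: t) = ι ℚ i * wl t := by
  simp [wl]

lemma counit_word (l : List (Fin 2)) :
    Fl (Δ (wl l)) = if l = [] then 1 else 0 := by
  induction l with
  | nil => simp [Algebra.TensorProduct.one_def]
  | cons i t ih =>
      rw [wl_cons, map_mul, Δ_ι, Fl_gen_mul, ih]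
      by_cases h : t = [] <;> simp [h]

@[simp] lemma Gl_one : Gl (1 : TA) = 0 := by
  rw [Algebra.TensorProduct.one_def]; simp

lemma Dword (l : List (Fin 2)) (hl : l ≠ []) :
    Dl (wl l) = bracketL (l.map (ι ℚ)) := by
  induction l with
  | nil => exact absurd rfl hl
  | cons i t ih =>
      have : Dl (wl (i :: t)) = ι ℚ i * Fl (Δ (wl t)) +
          (ι ℚ i * Gl (Δ (wl t)) - Gl (Δ (wl t)) * ι ℚ i) := by
        show Gl (Δ (wl (i :: t))) = _
        rw [wl_cons, map_mul, Δ_ι, Gl_gen_mul]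
      rw [this, counit_word]
      cases t with
      | nil => simp [bracketL]
      | cons j s =>
          have ht : (j :: s : List (Fin 2)) ≠ [] := by simp
          rw [if_neg ht]
          have ihd : Gl (Δ (wl (j :: s))) = bracketL ((j :: s).map (ι ℚ)) := ih ht
          rw [ihd]
          simp only [List.map_cons]
          show _ = ⁅ι ℚ i, bracketL (ι ℚ j :: s.map (ι ℚ))⁆
          rw [Ring.lie_def]
          noncomm_ring

lemma Nword (l : List (Fin 2)) : Nd (wl l) = (l.length : ℚ) • wl l := by
  induction l with
  | nil => simp
  | cons i t ih =>
      rw [wl_cons, Nd_mul, ih, Nd_ι, List.length_cons]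
      push_cast
      rw [mul_smul_comm]
      module

/-- the word of generators underlying `bchWord`/`bchList` -/
def wordList (k : ℕ) (pq : Fin k → ℕ × ℕ) : List (Fin 2) :=
  (List.ofFn fun i => List.replicate (pq i).1 0 ++ List.replicate (pq i).2 1).flatten

lemma map_wordList (k : ℕ) (pq : Fin k → ℕ × ℕ) :
    (wordList k pq).map (ι ℚ) = bchList k pq := by
  simp only [wordList, bchList, List.map_flatten, List.map_ofFn]
  have : (List.map (ι ℚ) ∘ fun i => List.replicate (pq i).1 0 ++ List.replicate (pq i).2 1)
      = fun i => List.replicate (pq i).1 Xg ++ List.replicate (pq i).2 Yg := by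
    funext i
    simp [Function.comp, List.map_replicate, Xg, Yg]
  rw [this]

lemma wl_wordList (k : ℕ) (pq : Fin k → ℕ × ℕ) :
    wl (wordList k pq) = bchWord k pq := by
  rw [wl, map_wordList]
  simp only [bchList, bchWord, List.prod_flatten, List.map_ofFn]
  have : (List.prod ∘ fun i => List.replicate (pq i).1 Xg ++ List.replicate (pq i).2 Yg)
      = fun i => Xg ^ (pq i).1 * Yg ^ (pq i).2 := by
    funext i
    simp [Function.comp, List.prod_replicate]
  rw [this]

lemma length_wordList (k : ℕ) (pq : Fin k → ℕ × ℕ) :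
    (wordList k pq).length = ∑ i, ((pq i).1 + (pq i).2) := by
  simp only [wordList, List.length_flatten, List.map_ofFn, Function.comp]
  rw [List.sum_ofFn]
  simp

lemma mem_bchIdx {k m : ℕ} {pq : Fin k → ℕ × ℕ} :
    pq ∈ bchIdx k m ↔ (∀ i, 1 ≤ (pq i).1 + (pq i).2) ∧ ∑ i, ((pq i).1 + (pq i).2) = m := by
  constructor
  · intro h; exact (Finset.mem_filter.mp h).2
  · intro h
    refine Finset.mem_filter.mpr ⟨Fintype.mem_piFinset.mpr fun i => ?_, h⟩
    have h1 : (pq i).1 + (pq i).2 ≤ m := h.2 ▸ Finset.single_le_sum (f := fun i => (pq i).1 + (pq i).2) (fun _ _ => Nat.zero_le _) (Finset.mem_univ i)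
    exact Finset.mem_product.mpr ⟨Finset.mem_range.mpr (by omega), Finset.mem_range.mpr (by omega)⟩

open PowerSeries in
def eX : PowerSeries A := PowerSeries.mk fun p => ((1 : ℚ) / p.factorial) • Xg ^ p
open PowerSeries in
def eY : PowerSeries A := PowerSeries.mk fun q => ((1 : ℚ) / q.factorial) • Yg ^ q
def Φ : PowerSeries A := eX * eY

lemma coeff_Φ (n : ℕ) : PowerSeries.coeff n Φ =
    ∑ z ∈ Finset.HasAntidiagonal.antidiagonal n, ((1 : ℚ) / (z.1.factorial * z.2.factorial)) • (Xg ^ z.1 * Yg ^ z.2) := by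
  rw [Φ, PowerSeries.coeff_mul]
  refine Finset.sum_congr rfl fun z hz => ?_
  rw [eX, eY, PowerSeries.coeff_mk, PowerSeries.coeff_mk, smul_mul_smul_comm,
    div_mul_div_comm, one_mul]

lemma constantCoeff_Φ : PowerSeries.constantCoeff Φ = 1 := by
  have := coeff_Φ 0
  rw [PowerSeries.coeff_zero_eq_constantCoeff] at this
  rw [this]
  simp

lemma coeff_f (n : ℕ) : PowerSeries.coeff n (Φ - 1) =
    ∑ z ∈ (Finset.HasAntidiagonal.antidiagonal n).filter (fun z => 1 ≤ z.1 + z.2),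
      ((1 : ℚ) / (z.1.factorial * z.2.factorial)) • (Xg ^ z.1 * Yg ^ z.2) := by
  rw [map_sub, coeff_Φ, PowerSeries.coeff_one]
  rcases Nat.eq_zero_or_pos n with hn | hn
  · subst hn
    rw [Finset.filter_false_of_mem, Finset.sum_empty]
    · simp
    · intro z hz
      rw [Finset.HasAntidiagonal.mem_antidiagonal] at hz
      omega
  · rw [Finset.filter_true_of_mem, if_neg (by omega), sub_zero]
    intro z hz
    rw [Finset.HasAntidiagonal.mem_antidiagonal] at hz
    omega

lemma keyExpansion : ∀ (k m : ℕ), PowerSeries.coeff m ((Φ - 1) ^ k) =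
    ∑ pq ∈ bchIdx k m,
      (∏ i, (1 : ℚ) / (((pq i).1.factorial : ℚ) * ((pq i).2.factorial : ℚ))) • bchWord k pq := by
  intro k
  induction k with
  | zero =>
      intro m
      rw [pow_zero, PowerSeries.coeff_one]
      rcases Nat.eq_zero_or_pos m with hm | hm
      · subst hm
        rw [if_pos rfl]
        have hu : bchIdx 0 0 = Finset.univ := by
          apply Finset.eq_univ_iff_forall.mpr
          intro pq
          exact mem_bchIdx.mpr ⟨fun i => i.elim0, by simp⟩
        rw [hu, Finset.univ_unique, Finset.sum_singleton]
        simp [bchWord]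
      · rw [if_neg (by omega)]
        have hu : bchIdx 0 m = ∅ := by
          apply Finset.eq_empty_iff_forall_notMem.mpr
          intro pq hpq
          have := (mem_bchIdx.mp hpq).2
          simp at this
          omega
        rw [hu, Finset.sum_empty]
  | succ k ih =>
      intro m
      rw [pow_succ', PowerSeries.coeff_mul]
      have step1 : ∀ ab : ℕ × ℕ,
          (PowerSeries.coeff ab.1 (Φ - 1)) * (PowerSeries.coeff ab.2 ((Φ - 1) ^ k))
          = ∑ z ∈ (Finset.HasAntidiagonal.antidiagonal ab.1).filter (fun z => 1 ≤ z.1 + z.2),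
              ∑ g ∈ bchIdx k ab.2,
              (((1 : ℚ) / (z.1.factorial * z.2.factorial)) *
                  ∏ i, (1 : ℚ) / (((g i).1.factorial : ℚ) * ((g i).2.factorial : ℚ)))
                • ((Xg ^ z.1 * Yg ^ z.2) * bchWord k g) := by
        intro ab
        rw [coeff_f, ih, Finset.sum_mul_sum]
        refine Finset.sum_congr rfl fun z hz => Finset.sum_congr rfl fun g hg => ?_
        rw [smul_mul_smul_comm]
      simp_rw [step1]
      rw [Finset.sum_sigma', Finset.sum_sigma']
      refine Finset.sum_bij' (i := fun x _ => Fin.cons x.1.2 x.2)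
        (j := fun h _ => ⟨⟨⟨(h 0).1 + (h 0).2, ∑ i, ((h (Fin.succ i)).1 + (h (Fin.succ i)).2)⟩,
            h 0⟩, fun i => h (Fin.succ i)⟩) ?_ ?_ ?_ ?_ ?_
      · rintro ⟨⟨ab, z⟩, g⟩ hx
        simp only [Finset.mem_sigma, Finset.mem_filter, Finset.HasAntidiagonal.mem_antidiagonal] at hx
        obtain ⟨⟨hab, hz, hz1⟩, hg⟩ := hx
        obtain ⟨hg1, hg2⟩ := mem_bchIdx.mp hg
        apply mem_bchIdx.mpr
        constructor
        · intro i
          refine Fin.cases ?_ ?_ i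
          · simpa using hz1
          · intro j; simpa using hg1 j
        · rw [Fin.sum_univ_succ]
          simp only [Fin.cons_zero, Fin.cons_succ]
          rw [hg2, hz]
          exact hab
      · intro h hh
        obtain ⟨h1, h2⟩ := mem_bchIdx.mp hh
        simp only [Finset.mem_sigma, Finset.mem_filter, Finset.HasAntidiagonal.mem_antidiagonal]
        rw [Fin.sum_univ_succ] at h2
        refine ⟨⟨h2, by trivial, h1 0⟩, ?_⟩
        · exact mem_bchIdx.mpr ⟨fun i => h1 (Fin.succ i), rfl⟩
      · rintro ⟨⟨ab, z⟩, g⟩ hx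
        simp only [Finset.mem_sigma, Finset.mem_filter, Finset.HasAntidiagonal.mem_antidiagonal] at hx
        obtain ⟨⟨hab, hz, hz1⟩, hg⟩ := hx
        obtain ⟨hg1, hg2⟩ := mem_bchIdx.mp hg
        simp only [Fin.cons_zero, Fin.cons_succ]
        congr 1
        · congr 1
          exact Prod.ext (by rw [hz]) (by rw [hg2])
      · intro h hh
        exact Fin.cons_self_tail h
      · rintro ⟨⟨ab, z⟩, g⟩ hx
        rw [Fin.prod_univ_succ]
        simp only [Fin.cons_zero, Fin.cons_succ]
        congr 1
        simp only [bchWord, List.ofFn_succ, List.prod_cons, Fin.cons_zero, Fin.cons_succ]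

section LogPoly
open MvPolynomial

abbrev P2 := MvPolynomial (Fin 2) ℚ

def wP (i j : Fin 2) : P2 := X i + X j + X i * X j

def FmP (m : ℕ) (i j : Fin 2) : P2 :=
  ∑ k ∈ Finset.Icc 1 m, ((-1 : ℚ) ^ (k - 1) / k) • ((wP i j) ^ k - X i ^ k - X j ^ k)

lemma FmP_symm (m : ℕ) (i j : Fin 2) : FmP m i j = FmP m j i := by
  refine Finset.sum_congr rfl fun k _ => ?_
  have h1 : wP i j = wP j i := by unfold wP; ring
  rw [h1]
  congr 1
  ring

lemma negsmul (j : ℕ) (z : P2) : ((-1 : ℚ) ^ j) • z ^ j = (-z) ^ j := by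
  rw [Algebra.smul_def, map_pow, map_neg, map_one]
  rw [neg_pow z, neg_pow (1 : P2), one_pow, mul_one]

lemma geo (m : ℕ) (z : P2) :
    (1 + z) * ∑ j ∈ Finset.range m, ((-1 : ℚ) ^ j) • z ^ j = 1 - (-z) ^ m := by
  simp_rw [negsmul]
  linear_combination (-1 : P2) * geom_sum_mul (-z) m

lemma pderiv_wP (i j : Fin 2) (hij : j ≠ i) : pderiv i (wP i j) = 1 + X j := by
  unfold wP
  simp [pderiv_mul, pderiv_X_self, pderiv_X_of_ne hij]

lemma derivFm (m : ℕ) (i j : Fin 2) (hij : j ≠ i) :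
    (1 + X i) * (pderiv i (FmP m i j)) = (- X i) ^ m - (-(wP i j)) ^ m := by
  unfold FmP
  rw [map_sum, Finset.mul_sum]
  have hterm : ∀ k ∈ Finset.Icc 1 m,
      (1 + X i) * (pderiv i (((-1 : ℚ) ^ (k - 1) / k) • ((wP i j) ^ k - X i ^ k - X j ^ k)))
      = ((-1 : ℚ) ^ (k - 1)) •
          ((1 + wP i j) * (wP i j) ^ (k - 1) - (1 + X i) * X i ^ (k - 1)) := by
    intro k hk
    have hk1 : 1 ≤ k := (Finset.mem_Icc.mp hk).1
    have hkq : (k : ℚ) ≠ 0 := by positivity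
    rw [Derivation.map_smul, map_sub, map_sub, pderiv_pow, pderiv_pow, pderiv_pow,
      pderiv_wP i j hij, pderiv_X_self, pderiv_X_of_ne hij, mul_smul_comm]
    have hM : (1 + X i) * ((k : P2) * wP i j ^ (k-1) * (1 + X j) - (k : P2) * X i ^ (k-1) * 1
          - (k : P2) * X j ^ (k-1) * 0)
        = (k : P2) * ((1 + wP i j) * (wP i j) ^ (k - 1) - (1 + X i) * X i ^ (k - 1)) := by
      unfold wP; ring
    rw [hM, ← nsmul_eq_mul, ← Nat.cast_smul_eq_nsmul ℚ, smul_smul, div_mul_cancel₀ _ hkq]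
  rw [Finset.sum_congr rfl hterm, ← Finset.Ico_add_one_right_eq_Icc, Finset.sum_Ico_eq_sum_range]
  simp only [Nat.succ_sub_one, Nat.add_sub_cancel, Nat.add_sub_cancel_left]
  have hsplit : ∑ jj ∈ Finset.range m,
        ((-1:ℚ)^jj) • ((1 + wP i j) * wP i j ^ jj - (1 + X i) * X i ^ jj)
      = (1 + wP i j) * (∑ jj ∈ Finset.range m, ((-1:ℚ)^jj) • wP i j ^ jj)
        - (1 + X i) * (∑ jj ∈ Finset.range m, ((-1:ℚ)^jj) • X i ^ jj) := by
    rw [Finset.mul_sum, Finset.mul_sum, ← Finset.sum_sub_distrib]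
    refine Finset.sum_congr rfl fun jj _ => ?_
    rw [smul_sub, mul_smul_comm, mul_smul_comm]
  rw [hsplit, geo, geo]
  ring

lemma fin2_eq_zero (σ : Fin 2 →₀ ℕ) (h0 : σ 0 = 0) (h1 : σ 1 = 0) : σ = 0 := by
  ext a
  fin_cases a <;> simpa

lemma lowcoeff_pow_mv (p : P2) (hp : constantCoeff p = 0) :
    ∀ (k : ℕ) (τ : Fin 2 →₀ ℕ), τ 0 + τ 1 < k → MvPolynomial.coeff τ (p ^ k) = 0 := by
  intro k
  induction k with
  | zero => intro τ h; omega
  | succ k ih =>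
      intro τ h
      rw [pow_succ', MvPolynomial.coeff_mul]
      apply Finset.sum_eq_zero
      rintro ⟨a, b⟩ hab
      rw [Finset.HasAntidiagonal.mem_antidiagonal] at hab
      by_cases ha : a = 0
      · subst ha
        have : MvPolynomial.coeff 0 p = 0 := hp
        rw [this, zero_mul]
      · have ha1 : 1 ≤ a 0 + a 1 := by
          by_contra hc
          exact ha (fin2_eq_zero a (by omega) (by omega))
        have hτ : τ 0 = a 0 + b 0 ∧ τ 1 = a 1 + b 1 := by
          constructor <;> · rw [← hab]; simp
        have : b 0 + b 1 < k := by omega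
        rw [ih b this, mul_zero]

lemma coeff_pderiv (i : Fin 2) (p : P2) (τ : Fin 2 →₀ ℕ) :
    MvPolynomial.coeff τ (pderiv i p) = ((τ i : ℚ) + 1) * MvPolynomial.coeff (τ + Finsupp.single i 1) p := by
  induction p using MvPolynomial.induction_on' with
  | monomial s a =>
      rw [pderiv_monomial, MvPolynomial.coeff_monomial, MvPolynomial.coeff_monomial]
      by_cases hs : s = τ + Finsupp.single i 1
      · subst hs
        have h1 : ((τ + Finsupp.single i 1 : Fin 2 →₀ ℕ)) i = τ i + 1 := by
          rw [Finsupp.add_apply, Finsupp.single_eq_same]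
        have h2 : τ + Finsupp.single i 1 - Finsupp.single i 1 = τ := add_tsub_cancel_right _ _
        rw [if_pos h2, if_pos rfl, h1]
        push_cast
        ring
      · rw [if_neg hs]
        by_cases hsi : s i = 0
        · have : a * (s i : ℚ) = 0 := by rw [hsi]; simp
          rw [this]
          simp
        · have hne : ¬(s - Finsupp.single i 1 = τ) := by
            intro he
            apply hs
            rw [← he, tsub_add_cancel_of_le]
            exact Finsupp.single_le_iff.mpr (by omega)
          rw [if_neg hne, mul_zero]
  | add p q hp hq =>
      rw [map_add, MvPolynomial.coeff_add, MvPolynomial.coeff_add, hp, hq]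
      ring

lemma coeffdiv (i : Fin 2) (p : P2) (d : ℕ)
    (h : ∀ τ : Fin 2 →₀ ℕ, τ 0 + τ 1 ≤ d → MvPolynomial.coeff τ ((1 + X i) * p) = 0) :
    ∀ τ : Fin 2 →₀ ℕ, τ 0 + τ 1 ≤ d → MvPolynomial.coeff τ p = 0 := by
  suffices H : ∀ (n : ℕ) (τ : Fin 2 →₀ ℕ), τ i = n → τ 0 + τ 1 ≤ d →
      MvPolynomial.coeff τ p = 0 by
    intro τ hτ; exact H (τ i) τ rfl hτ
  intro n
  induction n using Nat.strong_induction_on with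
  | _ n IH =>
      intro τ hτi hτd
      have h0 := h τ hτd
      rw [add_mul, one_mul, MvPolynomial.coeff_add, MvPolynomial.coeff_X_mul'] at h0
      by_cases hzi : i ∈ τ.support
      · have hn1 : 1 ≤ τ i := by
          rw [Finsupp.mem_support_iff] at hzi; omega
        rw [if_pos hzi] at h0
        have hlt : ((τ - Finsupp.single i 1 : Fin 2 →₀ ℕ)) i < n := by
          rw [Finsupp.tsub_apply, Finsupp.single_eq_same]
          omega
        have hd2 : ((τ - Finsupp.single i 1 : Fin 2 →₀ ℕ)) 0 + ((τ - Finsupp.single i 1 : Fin 2 →₀ ℕ)) 1 ≤ d := by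
          rw [Finsupp.tsub_apply, Finsupp.tsub_apply]
          have := Nat.sub_le (τ 0) (Finsupp.single i 1 0)
          have := Nat.sub_le (τ 1) (Finsupp.single i 1 1)
          omega
        rw [IH _ hlt _ rfl hd2, add_zero] at h0
        exact h0
      · rw [if_neg hzi, add_zero] at h0
        exact h0

lemma claimA (m : ℕ) (hm : 1 ≤ m) (σ : Fin 2 →₀ ℕ) (hσ : σ 0 + σ 1 ≤ m) :
    MvPolynomial.coeff σ (FmP m 0 1) = 0 := by
  have hwc : ∀ i j : Fin 2, constantCoeff (wP i j) = 0 := by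
    intro i j; simp [wP]
  have hdlow : ∀ (i j : Fin 2), j ≠ i → ∀ τ : Fin 2 →₀ ℕ, τ 0 + τ 1 ≤ m - 1 →
      MvPolynomial.coeff τ (pderiv i (FmP m i j)) = 0 := by
    intro i j hij
    apply coeffdiv i _ (m - 1)
    intro τ hτ
    rw [derivFm m i j hij]
    rw [MvPolynomial.coeff_sub]
    have l1 : MvPolynomial.coeff τ ((- X i : P2) ^ m) = 0 := by
      apply lowcoeff_pow_mv
      · simp
      · omega
    have l2 : MvPolynomial.coeff τ ((-(wP i j)) ^ m) = 0 := by
      apply lowcoeff_pow_mv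
      · rw [map_neg, hwc i j, neg_zero]
      · omega
    rw [l1, l2, sub_zero]
  by_cases h0 : σ 0 ≠ 0
  · set τ := σ - Finsupp.single 0 1 with hτdef
    have hle : Finsupp.single (0 : Fin 2) 1 ≤ σ := Finsupp.single_le_iff.mpr (by omega)
    have hττ : τ + Finsupp.single 0 1 = σ := tsub_add_cancel_of_le hle
    have hτ0 : τ 0 = σ 0 - 1 := by rw [hτdef, Finsupp.tsub_apply, Finsupp.single_eq_same]
    have hτ1 : τ 1 = σ 1 := by
      rw [hτdef, Finsupp.tsub_apply, Finsupp.single_eq_of_ne (by decide)]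
      omega
    have hcd := coeff_pderiv 0 (FmP m 0 1) τ
    rw [hττ, hdlow 0 1 (by decide) τ (by omega)] at hcd
    have hne : ((τ 0 : ℚ) + 1) ≠ 0 := by positivity
    exact (mul_eq_zero.mp hcd.symm).resolve_left hne
  · push_neg at h0
    by_cases h1 : σ 1 ≠ 0
    · rw [FmP_symm]
      set τ := σ - Finsupp.single 1 1 with hτdef
      have hle : Finsupp.single (1 : Fin 2) 1 ≤ σ := Finsupp.single_le_iff.mpr (by omega)
      have hττ : τ + Finsupp.single 1 1 = σ := tsub_add_cancel_of_le hle
      have hτ1 : τ 1 = σ 1 - 1 := by rw [hτdef, Finsupp.tsub_apply, Finsupp.single_eq_same]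
      have hτ0 : τ 0 = σ 0 := by
        rw [hτdef, Finsupp.tsub_apply, Finsupp.single_eq_of_ne (by decide)]
        omega
      have hcd := coeff_pderiv 1 (FmP m 1 0) τ
      rw [hττ, hdlow 1 0 (by decide) τ (by omega)] at hcd
      have hne : ((τ 1 : ℚ) + 1) ≠ 0 := by positivity
      exact (mul_eq_zero.mp hcd.symm).resolve_left hne
    · push_neg at h1
      rw [fin2_eq_zero σ h0 h1]
      unfold FmP
      rw [MvPolynomial.coeff_sum]
      apply Finset.sum_eq_zero
      intro k hk
      have hk1 := (Finset.mem_Icc.mp hk).1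
      rw [MvPolynomial.coeff_smul, MvPolynomial.coeff_sub, MvPolynomial.coeff_sub]
      rw [lowcoeff_pow_mv _ (hwc 0 1) k 0 (by simp; omega),
        lowcoeff_pow_mv (X 0) (by simp) k 0 (by simp; omega),
        lowcoeff_pow_mv (X 1) (by simp) k 0 (by simp; omega)]
      simp

end LogPoly

section LogAdd
open PowerSeries MvPolynomial

variable {R : Type} [Ring R] [Algebra ℚ R]

lemma ps_lowcoeff_pow (u : PowerSeries R) (hu : PowerSeries.constantCoeff u = 0) :
    ∀ (k j : ℕ), j < k → PowerSeries.coeff j (u ^ k) = 0 := by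
  intro k
  induction k with
  | zero => intro j h; omega
  | succ k ih =>
      intro j h
      rw [pow_succ', PowerSeries.coeff_mul]
      apply Finset.sum_eq_zero
      rintro ⟨a, b⟩ hab
      rw [Finset.HasAntidiagonal.mem_antidiagonal] at hab
      rcases Nat.eq_zero_or_pos a with ha | ha
      · subst ha
        have : PowerSeries.coeff 0 u = 0 := by
          rwa [PowerSeries.coeff_zero_eq_constantCoeff]
        rw [this, zero_mul]
      · rw [ih b (by omega), mul_zero]

lemma ps_lowcoeff_mul_pow (u v : PowerSeries R) (hu : PowerSeries.constantCoeff u = 0)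
    (hv : PowerSeries.constantCoeff v = 0) (a b j : ℕ) (h : j < a + b) :
    PowerSeries.coeff j (u ^ a * v ^ b) = 0 := by
  rw [PowerSeries.coeff_mul]
  apply Finset.sum_eq_zero
  rintro ⟨c, d⟩ hcd
  rw [Finset.HasAntidiagonal.mem_antidiagonal] at hcd
  rcases Nat.lt_or_ge c a with hc | hc
  · rw [ps_lowcoeff_pow u hu a c hc, zero_mul]
  · rw [ps_lowcoeff_pow v hv b d (by omega), mul_zero]

lemma logadd (u v : PowerSeries R)
    (hu : PowerSeries.constantCoeff u = 0) (hv : PowerSeries.constantCoeff v = 0)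
    (huv : u * v = v * u) (m : ℕ) (hm : 1 ≤ m) :
    ∑ k ∈ Finset.Icc 1 m, ((-1 : ℚ) ^ (k - 1) / k) • PowerSeries.coeff m ((u + v + u * v) ^ k)
      = (∑ k ∈ Finset.Icc 1 m, ((-1 : ℚ) ^ (k - 1) / k) • PowerSeries.coeff m (u ^ k))
        + ∑ k ∈ Finset.Icc 1 m, ((-1 : ℚ) ^ (k - 1) / k) • PowerSeries.coeff m (v ^ k) := by
  classical
  -- an evaluation homomorphism sending `X 0 ↦ v`, `X 1 ↦ u`
  let f1 : MvPolynomial (Fin 1) ℚ →ₐ[ℚ] PowerSeries R :=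
    (Polynomial.aeval u).comp ((Polynomial.mapAlgHom (isEmptyAlgEquiv ℚ (Fin 0)).toAlgHom).comp
      (finSuccEquiv ℚ 0).toAlgHom)
  have hcommpoly : ∀ q : Polynomial ℚ, Commute (Polynomial.aeval (R := ℚ) u q) v := by
    intro q
    induction q using Polynomial.induction_on' with
    | add p q hp hq => rw [map_add]; exact Commute.add_left hp hq
    | monomial n c =>
        rw [Polynomial.aeval_monomial]
        exact Commute.mul_left (Algebra.commutes c v) (Commute.pow_left huv n)
  have hcomm1 : ∀ a : MvPolynomial (Fin 1) ℚ, Commute (f1 a) v := fun a => hcommpoly _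
  let ψ : MvPolynomial (Fin 2) ℚ →ₐ[ℚ] PowerSeries R :=
    (Polynomial.eval₂AlgHom f1 v hcomm1).comp (MvPolynomial.finSuccEquiv ℚ 1).toAlgHom
  have hψ0 : ψ (MvPolynomial.X 0) = v := by
    show Polynomial.eval₂AlgHom f1 v hcomm1 (MvPolynomial.finSuccEquiv ℚ 1 (MvPolynomial.X 0)) = v
    rw [MvPolynomial.finSuccEquiv_X_zero]
    exact Polynomial.eval₂_X _ _
  have hψ1 : ψ (MvPolynomial.X 1) = u := by
    have h10 : (1 : Fin 2) = Fin.succ 0 := rfl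
    show Polynomial.eval₂AlgHom f1 v hcomm1 (MvPolynomial.finSuccEquiv ℚ 1 (MvPolynomial.X 1)) = u
    rw [h10, MvPolynomial.finSuccEquiv_X_succ, Polynomial.eval₂AlgHom_apply, Polynomial.eval₂_C]
    show Polynomial.aeval u ((Polynomial.mapAlgHom (isEmptyAlgEquiv ℚ (Fin 0)).toAlgHom)
      (MvPolynomial.finSuccEquiv ℚ 0 (MvPolynomial.X 0))) = u
    rw [MvPolynomial.finSuccEquiv_X_zero, Polynomial.coe_mapAlgHom, Polynomial.map_X,
      Polynomial.aeval_X]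
  have hψw : ψ (wP 0 1) = u + v + u * v := by
    unfold wP
    rw [map_add, map_add, map_mul, hψ0, hψ1, ← huv, add_comm v u]
  have hψFm : ψ (FmP m 0 1) =
      ∑ k ∈ Finset.Icc 1 m, ((-1 : ℚ) ^ (k - 1) / k) • ((u + v + u * v) ^ k - v ^ k - u ^ k) := by
    unfold FmP
    rw [map_sum]
    refine Finset.sum_congr rfl fun k _ => ?_
    rw [map_smul, map_sub, map_sub, map_pow, map_pow, map_pow, hψ0, hψ1, hψw]
  have hmon : ∀ (σ : Fin 2 →₀ ℕ) (c : ℚ), ψ (monomial σ c) = c • (v ^ σ 0 * u ^ σ 1) := by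
    intro σ c
    have hexp : monomial σ c = MvPolynomial.C c *
        (MvPolynomial.X 0 ^ σ 0 * MvPolynomial.X 1 ^ σ 1 : MvPolynomial (Fin 2) ℚ) := by
      rw [monomial_eq]
      congr 1
      rw [Finsupp.prod_fintype _ _ (fun i => pow_zero _), Fin.prod_univ_two]
    have hC : ψ (MvPolynomial.C c) = algebraMap ℚ (PowerSeries R) c := by
      rw [← MvPolynomial.algebraMap_eq]
      exact ψ.commutes c
    rw [hexp, map_mul, map_mul, map_pow, map_pow, hψ0, hψ1, hC, ← Algebra.smul_def]
  have hzero : PowerSeries.coeff m (ψ (FmP m 0 1)) = 0 := by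
    conv_lhs => rw [← MvPolynomial.support_sum_monomial_coeff (FmP m 0 1)]
    rw [map_sum, map_sum]
    apply Finset.sum_eq_zero
    intro σ hσ
    have hcne : MvPolynomial.coeff σ (FmP m 0 1) ≠ 0 := mem_support_iff.mp hσ
    have hdeg : m < σ 0 + σ 1 := by
      by_contra hc
      exact hcne (claimA m hm σ (by omega))
    rw [hmon, PowerSeries.coeff_smul, ps_lowcoeff_mul_pow v u hv hu _ _ m (by omega), smul_zero]
  rw [hψFm, map_sum] at hzero
  simp only [PowerSeries.coeff_smul, map_sub, smul_sub] at hzero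
  rw [Finset.sum_sub_distrib, Finset.sum_sub_distrib, sub_sub, sub_eq_zero] at hzero
  rw [hzero, add_comm]

end LogAdd

section Primitivity
open PowerSeries Algebra.TensorProduct

def Δ' : A →+* TA := Δ.toRingHom

def inlPS : PowerSeries A →+* PowerSeries TA :=
  PowerSeries.map (Algebra.TensorProduct.includeLeft : A →ₐ[ℚ] TA).toRingHom

def inrPS : PowerSeries A →+* PowerSeries TA :=
  PowerSeries.map (Algebra.TensorProduct.includeRight : A →ₐ[ℚ] TA).toRingHom

lemma psCommute {S : Type} [Semiring S] (φ ψ : PowerSeries S)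
    (h : ∀ i j, Commute (PowerSeries.coeff i φ) (PowerSeries.coeff j ψ)) :
    φ * ψ = ψ * φ := by
  ext n
  rw [PowerSeries.coeff_mul, PowerSeries.coeff_mul]
  conv_rhs => rw [← Finset.HasAntidiagonal.map_swap_antidiagonal, Finset.sum_map]
  refine Finset.sum_congr rfl fun p hp => ?_
  simp only [Function.Embedding.coeFn_mk, Prod.fst_swap, Prod.snd_swap]
  exact h p.1 p.2

def psExp (a : TA) : PowerSeries TA := PowerSeries.mk fun n => ((1 : ℚ) / n.factorial) • a ^ n

lemma psExp_add (a b : TA) (h : Commute a b) : psExp (a + b) = psExp a * psExp b := by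
  ext n
  rw [PowerSeries.coeff_mul, psExp, PowerSeries.coeff_mk, h.add_pow]
  rw [Finset.Nat.sum_antidiagonal_eq_sum_range_succ_mk, Finset.smul_sum]
  refine Finset.sum_congr rfl fun i hi => ?_
  have hin : i ≤ n := by
    rw [Finset.mem_range] at hi; omega
  simp only [psExp, PowerSeries.coeff_mk]
  rw [smul_mul_smul_comm]
  rw [(Nat.commute_cast (a ^ i * b ^ (n - i)) (n.choose i)).eq, ← nsmul_eq_mul,
    ← Nat.cast_smul_eq_nsmul ℚ, smul_smul]
  congr 1
  rw [div_mul_div_comm, one_mul, Nat.cast_choose ℚ hin]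
  field_simp
  try ring

lemma coeff_inlPS (φ : PowerSeries A) (n : ℕ) :
    PowerSeries.coeff n (inlPS φ) = (PowerSeries.coeff n φ) ⊗ₜ[ℚ] 1 := by
  rw [inlPS, PowerSeries.coeff_map]; rfl

lemma coeff_inrPS (φ : PowerSeries A) (n : ℕ) :
    PowerSeries.coeff n (inrPS φ) = 1 ⊗ₜ[ℚ] (PowerSeries.coeff n φ) := by
  rw [inrPS, PowerSeries.coeff_map]; rfl

lemma inlPS_eX : inlPS eX = psExp (Xg ⊗ₜ[ℚ] 1) := by
  ext n
  rw [coeff_inlPS, psExp, PowerSeries.coeff_mk, eX, PowerSeries.coeff_mk,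
    Algebra.TensorProduct.tmul_pow, one_pow, TensorProduct.smul_tmul']

lemma inlPS_eY : inlPS eY = psExp (Yg ⊗ₜ[ℚ] 1) := by
  ext n
  rw [coeff_inlPS, psExp, PowerSeries.coeff_mk, eY, PowerSeries.coeff_mk,
    Algebra.TensorProduct.tmul_pow, one_pow, TensorProduct.smul_tmul']

lemma inrPS_eX : inrPS eX = psExp ((1 : A) ⊗ₜ[ℚ] Xg) := by
  ext n
  rw [coeff_inrPS, psExp, PowerSeries.coeff_mk, eX, PowerSeries.coeff_mk,
    Algebra.TensorProduct.tmul_pow, one_pow, TensorProduct.tmul_smul]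

lemma inrPS_eY : inrPS eY = psExp ((1 : A) ⊗ₜ[ℚ] Yg) := by
  ext n
  rw [coeff_inrPS, psExp, PowerSeries.coeff_mk, eY, PowerSeries.coeff_mk,
    Algebra.TensorProduct.tmul_pow, one_pow, TensorProduct.tmul_smul]

lemma mapΔ_eX : PowerSeries.map Δ' eX = psExp (Xg ⊗ₜ[ℚ] 1) * psExp ((1 : A) ⊗ₜ[ℚ] Xg) := by
  rw [← psExp_add _ _ (by
    show (Xg ⊗ₜ[ℚ] (1:A)) * ((1:A) ⊗ₜ[ℚ] Xg) = ((1:A) ⊗ₜ[ℚ] Xg) * (Xg ⊗ₜ[ℚ] (1:A))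
    simp [Algebra.TensorProduct.tmul_mul_tmul])]
  ext n
  rw [PowerSeries.coeff_map, eX, PowerSeries.coeff_mk, psExp, PowerSeries.coeff_mk]
  show Δ _ = _
  rw [map_smul, map_pow]
  congr 2
  exact Δ_ι 0

lemma mapΔ_eY : PowerSeries.map Δ' eY = psExp (Yg ⊗ₜ[ℚ] 1) * psExp ((1 : A) ⊗ₜ[ℚ] Yg) := by
  rw [← psExp_add _ _ (by
    show (Yg ⊗ₜ[ℚ] (1:A)) * ((1:A) ⊗ₜ[ℚ] Yg) = ((1:A) ⊗ₜ[ℚ] Yg) * (Yg ⊗ₜ[ℚ] (1:A))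
    simp [Algebra.TensorProduct.tmul_mul_tmul])]
  ext n
  rw [PowerSeries.coeff_map, eY, PowerSeries.coeff_mk, psExp, PowerSeries.coeff_mk]
  show Δ _ = _
  rw [map_smul, map_pow]
  congr 2
  exact Δ_ι 1

lemma psExp_cross_commute : psExp ((1 : A) ⊗ₜ[ℚ] Xg) * psExp (Yg ⊗ₜ[ℚ] 1)
    = psExp (Yg ⊗ₜ[ℚ] 1) * psExp ((1 : A) ⊗ₜ[ℚ] Xg) := by
  apply psCommute
  intro i j
  simp only [psExp, PowerSeries.coeff_mk, Algebra.TensorProduct.tmul_pow, one_pow]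
  apply Commute.smul_left
  apply Commute.smul_right
  show _ = _
  simp [Algebra.TensorProduct.tmul_mul_tmul]

lemma mapΔ_Φ : PowerSeries.map Δ' Φ = inlPS Φ * inrPS Φ := by
  have h1 : PowerSeries.map Δ' Φ = PowerSeries.map Δ' eX * PowerSeries.map Δ' eY := by
    rw [Φ, map_mul]
  rw [h1, mapΔ_eX, mapΔ_eY, Φ, map_mul, map_mul, inlPS_eX, inlPS_eY, inrPS_eX, inrPS_eY]
  rw [mul_assoc, ← mul_assoc (psExp ((1 : A) ⊗ₜ[ℚ] Xg)), psExp_cross_commute]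
  noncomm_ring

def Em (m : ℕ) : A :=
  ∑ k ∈ Finset.Icc 1 m, ((-1 : ℚ) ^ (k - 1) / k) • PowerSeries.coeff m ((Φ - 1) ^ k)

lemma prim (m : ℕ) (hm : 1 ≤ m) : Δ (Em m) = Em m ⊗ₜ[ℚ] 1 + 1 ⊗ₜ[ℚ] Em m := by
  set u := inlPS Φ - 1 with hudef
  set v := inrPS Φ - 1 with hvdef
  have hg1 : PowerSeries.constantCoeff (inlPS Φ) = 1 := by
    have := coeff_inlPS Φ 0
    rw [PowerSeries.coeff_zero_eq_constantCoeff, PowerSeries.coeff_zero_eq_constantCoeff] at this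
    rw [this, constantCoeff_Φ, Algebra.TensorProduct.one_def]
  have hg2 : PowerSeries.constantCoeff (inrPS Φ) = 1 := by
    have := coeff_inrPS Φ 0
    rw [PowerSeries.coeff_zero_eq_constantCoeff, PowerSeries.coeff_zero_eq_constantCoeff] at this
    rw [this, constantCoeff_Φ, Algebra.TensorProduct.one_def]
  have hu : PowerSeries.constantCoeff u = 0 := by
    rw [hudef, map_sub, hg1, map_one, sub_self]
  have hv : PowerSeries.constantCoeff v = 0 := by
    rw [hvdef, map_sub, hg2, map_one, sub_self]
  have hswap : inlPS Φ * inrPS Φ = inrPS Φ * inlPS Φ := by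
    apply psCommute
    intro i j
    rw [coeff_inlPS, coeff_inrPS]
    show _ = _
    simp [Algebra.TensorProduct.tmul_mul_tmul]
  have huv : u * v = v * u := by
    rw [hudef, hvdef]
    simp only [sub_mul, mul_sub, one_mul, mul_one]
    rw [hswap]
    abel
  have hid : PowerSeries.map Δ' Φ - 1 = u + v + u * v := by
    have : (1 + u) * (1 + v) = inlPS Φ * inrPS Φ := by
      rw [hudef, hvdef]
      simp
    rw [mapΔ_Φ, ← this]
    noncomm_ring
  have hΔcoeff : ∀ k : ℕ, Δ (PowerSeries.coeff m ((Φ - 1) ^ k))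
      = PowerSeries.coeff m ((u + v + u * v) ^ k) := by
    intro k
    have h1 : PowerSeries.map Δ' ((Φ - 1) ^ k) = (u + v + u * v) ^ k := by
      rw [map_pow, map_sub, map_one, hid]
    rw [← h1, PowerSeries.coeff_map]
    rfl
  have hEq : Δ (Em m) = ∑ k ∈ Finset.Icc 1 m,
      ((-1 : ℚ) ^ (k - 1) / k) • PowerSeries.coeff m ((u + v + u * v) ^ k) := by
    rw [Em, map_sum]
    refine Finset.sum_congr rfl fun k _ => ?_
    rw [map_smul, hΔcoeff]
  rw [hEq, logadd u v hu hv huv m hm]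
  congr 1
  · have hupow : ∀ k : ℕ, PowerSeries.coeff m (u ^ k)
        = (PowerSeries.coeff m ((Φ - 1) ^ k)) ⊗ₜ[ℚ] 1 := by
      intro k
      have h2 : u ^ k = inlPS ((Φ - 1) ^ k) := by
        rw [hudef, map_pow, map_sub, map_one]
      rw [h2, coeff_inlPS]
    simp only [hupow]
    rw [Em, TensorProduct.sum_tmul]
    refine Finset.sum_congr rfl fun k _ => ?_
    rw [TensorProduct.smul_tmul']
  · have hvpow : ∀ k : ℕ, PowerSeries.coeff m (v ^ k)
        = (1 : A) ⊗ₜ[ℚ] (PowerSeries.coeff m ((Φ - 1) ^ k)) := by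
      intro k
      have h2 : v ^ k = inrPS ((Φ - 1) ^ k) := by
        rw [hvdef, map_pow, map_sub, map_one]
      rw [h2, coeff_inrPS]
    simp only [hvpow]
    rw [Em, TensorProduct.tmul_sum]
    refine Finset.sum_congr rfl fun k _ => ?_
    rw [TensorProduct.tmul_smul]

end Primitivity

section Final

lemma Nd_bchWord {k m : ℕ} {pq : Fin k → ℕ × ℕ} (h : pq ∈ bchIdx k m) :
    Nd (bchWord k pq) = (m : ℚ) • bchWord k pq := by
  rw [← wl_wordList, Nword, length_wordList, (mem_bchIdx.mp h).2]

lemma Dl_bchWord {k m : ℕ} (hm : 1 ≤ m) {pq : Fin k → ℕ × ℕ} (h : pq ∈ bchIdx k m) :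
    Dl (bchWord k pq) = bracketL (bchList k pq) := by
  rw [← wl_wordList, ← map_wordList]
  apply Dword
  intro hnil
  have hlen := length_wordList k pq
  rw [hnil, (mem_bchIdx.mp h).2] at hlen
  simp only [List.length_nil] at hlen
  omega

lemma Em_eq (m : ℕ) : Em m = ∑ k ∈ Finset.Icc 1 m, ((-1 : ℚ) ^ (k - 1) / k) •
    ∑ pq ∈ bchIdx k m,
      (∏ i, (1 : ℚ) / (((pq i).1.factorial : ℚ) * ((pq i).2.factorial : ℚ))) • bchWord k pq := by
  rw [Em]
  exact Finset.sum_congr rfl fun k _ => by rw [keyExpansion]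

lemma Nd_Em (m : ℕ) : Nd (Em m) = (m : ℚ) • Em m := by
  rw [Em_eq, map_sum, Finset.smul_sum]
  refine Finset.sum_congr rfl fun k _ => ?_
  rw [map_smul, smul_comm ((m : ℚ))]
  congr 1
  rw [map_sum, Finset.smul_sum]
  refine Finset.sum_congr rfl fun pq hpq => ?_
  rw [map_smul, Nd_bchWord hpq, smul_comm]

lemma Dl_Em (m : ℕ) (hm : 1 ≤ m) : Dl (Em m) = (m : ℚ) • Em m := by
  have h1 : Dl (Em m) = Gl (Δ (Em m)) := rfl
  rw [h1, prim m hm, map_add, Gl_tmul, Gl_tmul, Sl_one, Nd_one, mul_one, zero_mul, add_zero,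
    Nd_Em]

lemma Dl_Em_eq (m : ℕ) (hm : 1 ≤ m) : Dl (Em m) =
    ∑ k ∈ Finset.Icc 1 m, ((-1 : ℚ) ^ (k - 1) / k) •
      ∑ pq ∈ bchIdx k m,
        (∏ i, (1 : ℚ) / (((pq i).1.factorial : ℚ) * ((pq i).2.factorial : ℚ))) •
          bracketL (bchList k pq) := by
  rw [Em_eq, map_sum]
  refine Finset.sum_congr rfl fun k _ => ?_
  rw [map_smul, map_sum]
  congr 1
  refine Finset.sum_congr rfl fun pq hpq => ?_
  rw [map_smul, Dl_bchWord hm hpq]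

end Final

end
end DynkinProof

/-- (Dynkin's formula for the Baker–Campbell–Hausdorff series, in homogeneous components.)
The `m`-th homogeneous component of `log((exp X)(exp Y))` equals `1/m` times the same
expression with each word replaced by its left-iterated bracket. -/
theorem dynkin_BCH_formula (m : ℕ) (hm : 1 ≤ m) :
    (∑ k ∈ Finset.Icc 1 m, ((-1 : ℚ) ^ (k - 1) / k) •
        ∑ pq ∈ bchIdx k m,
          (∏ i, (1 : ℚ) / (((pq i).1.factorial : ℚ) * ((pq i).2.factorial : ℚ))) •
            bchWord k pq) =
      (1 / (m : ℚ)) •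
        ∑ k ∈ Finset.Icc 1 m, ((-1 : ℚ) ^ (k - 1) / k) •
          ∑ pq ∈ bchIdx k m,
            (∏ i, (1 : ℚ) / (((pq i).1.factorial : ℚ) * ((pq i).2.factorial : ℚ))) •
              bracketL (bchList k pq) := by
  have hm0 : (m : ℚ) ≠ 0 := by positivity
  calc (∑ k ∈ Finset.Icc 1 m, ((-1 : ℚ) ^ (k - 1) / k) •
        ∑ pq ∈ bchIdx k m,
          (∏ i, (1 : ℚ) / (((pq i).1.factorial : ℚ) * ((pq i).2.factorial : ℚ))) •
            bchWord k pq)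
      = DynkinProof.Em m := (DynkinProof.Em_eq m).symm
    _ = (1 / (m : ℚ)) • ((m : ℚ) • DynkinProof.Em m) := by
        rw [smul_smul, one_div, inv_mul_cancel₀ hm0, one_smul]
    _ = (1 / (m : ℚ)) • DynkinProof.Dl (DynkinProof.Em m) := by rw [DynkinProof.Dl_Em m hm]
    _ = _ := by rw [DynkinProof.Dl_Em_eq m hm]
end

section
/- (Resolvent integral representation of β(x) = x/(e^x − 1).) For every real number x ≠ 0: x/(Real.exp x − 1) = 1 + ∫_{λ=0}^{1} (λ − 1)·(Real.exp x − 1)/(λ + (1 − λ)·Real.exp x) dλ, where the integral is over the interval [0,1] (note that λ + (1 − λ)·e^x > 0 for all λ ∈ [0,1]). -/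
/-- (Resolvent integral representation of `β(x) = x/(eˣ - 1)`.)  For `x ≠ 0`,
`x/(eˣ - 1) = 1 + ∫₀¹ (t - 1)·(eˣ - 1)/(t + (1 - t)·eˣ) dt`. -/
theorem beta_eq_resolvent_integral (x : ℝ) (hx : x ≠ 0) :
    x / (Real.exp x - 1) =
      1 + ∫ t in (0 : ℝ)..1, (t - 1) * (Real.exp x - 1) / (t + (1 - t) * Real.exp x) := by
  set a := Real.exp x with ha
  have ha0 : 0 < a := Real.exp_pos x
  have hb : a - 1 ≠ 0 := by
    rw [sub_ne_zero, ha]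
    intro h
    rw [Real.exp_eq_one_iff] at h; exact hx h
  have hpos : ∀ t ∈ Set.Icc (0:ℝ) 1, 0 < t + (1 - t) * a := by
    intro t ht
    rcases ht with ⟨h0, h1⟩
    nlinarith [mul_nonneg (by linarith : (0:ℝ) ≤ 1 - t) ha0.le]
  have hint : ∀ t ∈ Set.uIcc (0:ℝ) 1,
      HasDerivAt (fun s => -s - (a-1)⁻¹ * Real.log (a - s*(a-1)))
        ((t - 1) * (a - 1) / (t + (1 - t) * a)) t := by
    intro t ht
    rw [Set.uIcc_of_le zero_le_one] at ht
    have hpt := hpos t ht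
    have hpt' : a - t*(a-1) ≠ 0 := by
      have : a - t*(a-1) = t + (1-t)*a := by ring
      rw [this]; exact hpt.ne'
    have h1 : HasDerivAt (fun s : ℝ => a - s*(a-1)) (-(a-1)) t := by
      simpa using ((hasDerivAt_id t).mul_const (a-1)).const_sub a
    have h2 := (h1.log hpt').const_mul (a-1)⁻¹
    have h3 := ((hasDerivAt_id t).neg.sub h2)
    convert h3 using 1
    · rfl
    · rfl
    · rfl
    have hd : a - t*(a-1) = t + (1-t)*a := by ring
    rw [hd]
    rw [neg_div, mul_neg, ← mul_div_assoc, inv_mul_cancel₀ hb, eq_sub_iff_add_eq, ← neg_div, ← add_div, div_eq_iff hpt.ne']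
    ring
  have hcont : ContinuousOn
      (fun t : ℝ => (t - 1) * (a - 1) / (t + (1 - t) * a)) (Set.uIcc (0:ℝ) 1) := by
    rw [Set.uIcc_of_le zero_le_one]
    apply ContinuousOn.div
    · fun_prop
    · fun_prop
    · intro t ht; exact (hpos t ht).ne'
  have key := intervalIntegral.integral_eq_sub_of_hasDerivAt hint
    (hcont.intervalIntegrable)
  rw [key]
  have h1 : a - 1*(a-1) = 1 := by ring
  have h0 : a - 0*(a-1) = a := by ring
  rw [h1, h0, Real.log_one, ha, Real.log_exp]
  field_simp
  ring
end
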